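/- arXiv:1712.08276 — 12 statements merged into one kernel-verified Lean document; each statement's English description precedes it below -/
import Mathlib

section
/- In a skew monoidal category equipped with a natural isomorphism s : (XA)B → (XB)A satisfying the braiding axiom (S3a) (compatibility of s with the associator in the form: a ∘ s ∘ (s⊗1) = s ∘ a⊗1, i.e. the composite ((XA)B)C →^{s1} ((XB)A)C →^{s} ((XB)C)A →^{a1} (X(BC))A equals ((XA)B)C →^{a} (XA)(BC) →^{s} (X(BC))A), the composite (WB)A →^{r} ((WB)A)I →^{s} ((WB)I)A →^{a1} (W(BI))A is equal to (1r)1 : (WB)A → (W(BI))A. -/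
open CategoryTheory

universe v u

/-- A (left) skew monoidal category: tensor, unit, and structure maps
`a : (XY)Z ⟶ X(YZ)`, `ℓ : IX ⟶ X`, `r : X ⟶ XI` satisfying the five
coherence conditions of Szlachányi (none required to be invertible). -/
structure SkewMonoidalStruct (C : Type u) [Category.{v} C] where
  tensor : C → C → C
  tensorHom : ∀ {X X' Y Y' : C}, (X ⟶ X') → (Y ⟶ Y') → (tensor X Y ⟶ tensor X' Y')
  tensorHom_id : ∀ (X Y : C), tensorHom (𝟙 X) (𝟙 Y) = 𝟙 (tensor X Y)
  tensorHom_comp : ∀ {X X' X'' Y Y' Y'' : C} (f : X ⟶ X') (f' : X' ⟶ X'')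
      (g : Y ⟶ Y') (g' : Y' ⟶ Y''),
      tensorHom (f ≫ f') (g ≫ g') = tensorHom f g ≫ tensorHom f' g'
  unit : C
  assoc : ∀ X Y Z : C, tensor (tensor X Y) Z ⟶ tensor X (tensor Y Z)
  lunit : ∀ X : C, tensor unit X ⟶ X
  runit : ∀ X : C, X ⟶ tensor X unit
  assoc_natural : ∀ {X X' Y Y' Z Z' : C} (f : X ⟶ X') (g : Y ⟶ Y') (h : Z ⟶ Z'),
      tensorHom (tensorHom f g) h ≫ assoc X' Y' Z' =
        assoc X Y Z ≫ tensorHom f (tensorHom g h)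
  lunit_natural : ∀ {X X' : C} (f : X ⟶ X'),
      tensorHom (𝟙 unit) f ≫ lunit X' = lunit X ≫ f
  runit_natural : ∀ {X X' : C} (f : X ⟶ X'),
      runit X ≫ tensorHom f (𝟙 unit) = f ≫ runit X'
  pentagon : ∀ W X Y Z : C,
      tensorHom (assoc W X Y) (𝟙 Z) ≫ assoc W (tensor X Y) Z ≫
        tensorHom (𝟙 W) (assoc X Y Z) =
      assoc (tensor W X) Y Z ≫ assoc W X (tensor Y Z)
  lunit_assoc : ∀ X Y : C,
      assoc unit X Y ≫ lunit (tensor X Y) = tensorHom (lunit X) (𝟙 Y)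
  runit_assoc : ∀ X Y : C,
      runit (tensor X Y) ≫ assoc X Y unit = tensorHom (𝟙 X) (runit Y)
  middle_unit : ∀ X Y : C,
      tensorHom (runit X) (𝟙 Y) ≫ assoc X unit Y ≫ tensorHom (𝟙 X) (lunit Y) =
        𝟙 (tensor X Y)
  lunit_runit : runit unit ≫ lunit unit = 𝟙 unit

namespace SkewMonoidalStruct

variable {C : Type u} [Category.{v} C] (M : SkewMonoidalStruct C)

/-- Naturality (in all three variables) for a family `s : (XA)B ⟶ (XB)A`. -/
def SNatural (s : ∀ X A B : C, M.tensor (M.tensor X A) B ⟶ M.tensor (M.tensor X B) A) : Prop :=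
  ∀ {X X' A A' B B' : C} (f : X ⟶ X') (g : A ⟶ A') (h : B ⟶ B'),
    M.tensorHom (M.tensorHom f g) h ≫ s X' A' B' =
      s X A B ≫ M.tensorHom (M.tensorHom f h) g

/-- Axiom (S2), the Yang–Baxter-type hexagon. -/
def S2 (s : ∀ X A B : C, M.tensor (M.tensor X A) B ⟶ M.tensor (M.tensor X B) A) : Prop :=
  ∀ X A B Cc : C,
    s (M.tensor X A) B Cc ≫ M.tensorHom (s X A Cc) (𝟙 B) ≫ s (M.tensor X Cc) A B =
      M.tensorHom (s X A B) (𝟙 Cc) ≫ s (M.tensor X B) A Cc ≫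
        M.tensorHom (s X B Cc) (𝟙 A)

/-- Axiom (S3a): the composite `((XA)B)C →^{s1} ((XB)A)C →^{s} ((XB)C)A →^{a1} (X(BC))A`
equals `((XA)B)C →^{a} (XA)(BC) →^{s} (X(BC))A`. -/
def S3a (s : ∀ X A B : C, M.tensor (M.tensor X A) B ⟶ M.tensor (M.tensor X B) A) : Prop :=
  ∀ X A B Cc : C,
    M.tensorHom (s X A B) (𝟙 Cc) ≫ s (M.tensor X B) A Cc ≫
        M.tensorHom (M.assoc X B Cc) (𝟙 A) =
      M.assoc (M.tensor X A) B Cc ≫ s X A (M.tensor B Cc)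

/-- Axiom (S3b): the composite `((XA)B)C →^{s} ((XA)C)B →^{s1} ((XC)A)B →^{a} (XC)(AB)`
equals `((XA)B)C →^{a1} (X(AB))C →^{s} (XC)(AB)`. -/
def S3b (s : ∀ X A B : C, M.tensor (M.tensor X A) B ⟶ M.tensor (M.tensor X B) A) : Prop :=
  ∀ X A B Cc : C,
    s (M.tensor X A) B Cc ≫ M.tensorHom (s X A Cc) (𝟙 B) ≫
        M.assoc (M.tensor X Cc) A B =
      M.tensorHom (M.assoc X A B) (𝟙 Cc) ≫ s X (M.tensor A B) Cc

/-- Axiom (S*). -/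
def Sstar (s : ∀ X A B : C, M.tensor (M.tensor X A) B ⟶ M.tensor (M.tensor X B) A) : Prop :=
  ∀ X A B Cc : C,
    M.tensorHom (M.assoc X A B) (𝟙 Cc) ≫ M.assoc X (M.tensor A B) Cc ≫
        M.tensorHom (𝟙 X) (s A B Cc) =
      s (M.tensor X A) B Cc ≫ M.tensorHom (M.assoc X A Cc) (𝟙 B) ≫
        M.assoc X (M.tensor A Cc) B

end SkewMonoidalStruct

/-- Lemma: consequence of (S3a).
In a skew monoidal category with a natural isomorphism `s : (XA)B ⟶ (XB)A`
satisfying (S3a), the composite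
`(WB)A →^{r} ((WB)A)I →^{s} ((WB)I)A →^{a1} (W(BI))A` equals `(1r)1`. -/
theorem stmt0 {C : Type u} [Category.{v} C] (M : SkewMonoidalStruct C)
    (s : ∀ X A B : C, M.tensor (M.tensor X A) B ⟶ M.tensor (M.tensor X B) A)
    (hiso : ∀ X A B : C, IsIso (s X A B))
    (hnat : M.SNatural s) (h3a : M.S3a s) :
    ∀ W B A : C,
      M.runit (M.tensor (M.tensor W B) A) ≫ s (M.tensor W B) A M.unit ≫
          M.tensorHom (M.assoc W B M.unit) (𝟙 A) =
        M.tensorHom (M.tensorHom (𝟙 W) (M.runit B)) (𝟙 A) := by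
  intro W B A
  haveI := hiso W A B
  -- inverse of `s W A B ⊗ 1`
  haveI hIso1 : IsIso (M.tensorHom (s W A B) (𝟙 M.unit)) := by
    refine ⟨M.tensorHom (inv (s W A B)) (𝟙 M.unit), ?_, ?_⟩
    · rw [← M.tensorHom_comp, IsIso.hom_inv_id, Category.comp_id, M.tensorHom_id]
    · rw [← M.tensorHom_comp, IsIso.inv_hom_id, Category.comp_id, M.tensorHom_id]
  have key := h3a W A B M.unit
  have step1 : s (M.tensor W B) A M.unit ≫ M.tensorHom (M.assoc W B M.unit) (𝟙 A) =
      inv (M.tensorHom (s W A B) (𝟙 M.unit)) ≫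
        M.assoc (M.tensor W A) B M.unit ≫ s W A (M.tensor B M.unit) := by
    rw [← key, IsIso.inv_hom_id_assoc]
  rw [step1]
  have step2 : M.runit (M.tensor (M.tensor W B) A) ≫
      inv (M.tensorHom (s W A B) (𝟙 M.unit)) =
      inv (s W A B) ≫ M.runit (M.tensor (M.tensor W A) B) := by
    have htn := M.runit_natural (s W A B)
    rw [IsIso.comp_inv_eq, Category.assoc, htn, IsIso.inv_hom_id_assoc]
  rw [← Category.assoc, step2, Category.assoc]
  have step3 : M.runit (M.tensor (M.tensor W A) B) ≫
      M.assoc (M.tensor W A) B M.unit =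
      M.tensorHom (M.tensorHom (𝟙 W) (𝟙 A)) (M.runit B) := by
    rw [M.runit_assoc, M.tensorHom_id]
  have step4 : M.tensorHom (M.tensorHom (𝟙 W) (𝟙 A)) (M.runit B) ≫
      s W A (M.tensor B M.unit) =
      s W A B ≫ M.tensorHom (M.tensorHom (𝟙 W) (M.runit B)) (𝟙 A) :=
    hnat (𝟙 W) (𝟙 A) (M.runit B)
  rw [← Category.assoc (M.runit _) (M.assoc _ _ _), step3, step4,
    IsIso.inv_hom_id_assoc]
end

section
/- In a skew monoidal category with a natural isomorphism s : (XA)B → (XB)A satisfying braiding axiom (S3a), the triangle WA →^{r} (WA)I →^{s} (WI)A equals r⊗1 : WA → (WI)A. -/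
open CategoryTheory

universe v u

/-- Proposition: consequence of (S3a).
In a skew monoidal category with a natural isomorphism `s : (XA)B ⟶ (XB)A`
satisfying (S3a), the triangle `WA →^{r} (WA)I →^{s} (WI)A` equals `r ⊗ 1`. -/
theorem stmt1 {C : Type u} [Category.{v} C] (M : SkewMonoidalStruct C)
    (s : ∀ X A B : C, M.tensor (M.tensor X A) B ⟶ M.tensor (M.tensor X B) A)
    (hiso : ∀ X A B : C, IsIso (s X A B))
    (hnat : M.SNatural s) (h3a : M.S3a s) :
    ∀ W A : C,
      M.runit (M.tensor W A) ≫ s W A M.unit =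
        M.tensorHom (M.runit W) (𝟙 A) := by
  intro W A
  -- (†): for all X B, r_{(XB)A} ≫ s_{XB,A,M.unit} ≫ (a_{X,B,M.unit} ⊗ 1_A) = (1_X ⊗ r_B) ⊗ 1_A
  have dagger : ∀ X B : C,
      M.runit (M.tensor (M.tensor X B) A) ≫ s (M.tensor X B) A M.unit ≫
          M.tensorHom (M.assoc X B M.unit) (𝟙 A) =
        M.tensorHom (M.tensorHom (𝟙 X) (M.runit B)) (𝟙 A) := by
    intro X B
    have := hiso X A B
    rw [← cancel_epi (s X A B)]
    calc s X A B ≫ M.runit (M.tensor (M.tensor X B) A) ≫ s (M.tensor X B) A M.unit ≫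
            M.tensorHom (M.assoc X B M.unit) (𝟙 A)
        = (s X A B ≫ M.runit (M.tensor (M.tensor X B) A)) ≫ s (M.tensor X B) A M.unit ≫
            M.tensorHom (M.assoc X B M.unit) (𝟙 A) := by
          simp only [Category.assoc]
      _ = M.runit (M.tensor (M.tensor X A) B) ≫ M.tensorHom (s X A B) (𝟙 M.unit) ≫
            s (M.tensor X B) A M.unit ≫ M.tensorHom (M.assoc X B M.unit) (𝟙 A) := by
          rw [← M.runit_natural (s X A B)]; simp only [Category.assoc]
      _ = M.runit (M.tensor (M.tensor X A) B) ≫ M.assoc (M.tensor X A) B M.unit ≫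
            s X A (M.tensor B M.unit) := by rw [h3a X A B M.unit]
      _ = (M.runit (M.tensor (M.tensor X A) B) ≫ M.assoc (M.tensor X A) B M.unit) ≫
            s X A (M.tensor B M.unit) := by simp only [Category.assoc]
      _ = M.tensorHom (𝟙 (M.tensor X A)) (M.runit B) ≫ s X A (M.tensor B M.unit) := by
          rw [M.runit_assoc (M.tensor X A) B]
      _ = M.tensorHom (M.tensorHom (𝟙 X) (𝟙 A)) (M.runit B) ≫ s X A (M.tensor B M.unit) := by
          rw [M.tensorHom_id]
      _ = s X A B ≫ M.tensorHom (M.tensorHom (𝟙 X) (M.runit B)) (𝟙 A) :=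
          hnat (𝟙 X) (𝟙 A) (M.runit B)
  -- θ : (WI)M.unit ⟶ WI
  set θ : M.tensor (M.tensor W M.unit) M.unit ⟶ M.tensor W M.unit :=
    M.assoc W M.unit M.unit ≫ M.tensorHom (𝟙 W) (M.lunit M.unit) with hθ
  -- (‡): r_{(WI)A} ≫ s_{WI,A,M.unit} ≫ (θ ⊗ 1_A) = 1
  have key : M.runit (M.tensor (M.tensor W M.unit) A) ≫ s (M.tensor W M.unit) A M.unit ≫
      M.tensorHom θ (𝟙 A) = 𝟙 (M.tensor (M.tensor W M.unit) A) := by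
    have hsplit : M.tensorHom θ (𝟙 A) =
        M.tensorHom (M.assoc W M.unit M.unit) (𝟙 A) ≫
          M.tensorHom (M.tensorHom (𝟙 W) (M.lunit M.unit)) (𝟙 A) := by
      rw [← M.tensorHom_comp, Category.comp_id]
    calc M.runit (M.tensor (M.tensor W M.unit) A) ≫ s (M.tensor W M.unit) A M.unit ≫
            M.tensorHom θ (𝟙 A)
        = (M.runit (M.tensor (M.tensor W M.unit) A) ≫ s (M.tensor W M.unit) A M.unit ≫
            M.tensorHom (M.assoc W M.unit M.unit) (𝟙 A)) ≫
            M.tensorHom (M.tensorHom (𝟙 W) (M.lunit M.unit)) (𝟙 A) := by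
          rw [hsplit]; simp only [Category.assoc]
      _ = M.tensorHom (M.tensorHom (𝟙 W) (M.runit M.unit)) (𝟙 A) ≫
            M.tensorHom (M.tensorHom (𝟙 W) (M.lunit M.unit)) (𝟙 A) := by
          rw [dagger W M.unit]
      _ = M.tensorHom (M.tensorHom (𝟙 W ≫ 𝟙 W) (M.runit M.unit ≫ M.lunit M.unit)) (𝟙 A ≫ 𝟙 A) := by
          rw [M.tensorHom_comp, M.tensorHom_comp]
      _ = 𝟙 (M.tensor (M.tensor W M.unit) A) := by
          rw [Category.comp_id, Category.comp_id, M.lunit_runit, M.tensorHom_id,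
            M.tensorHom_id]
  -- step: ((r_W ⊗ 1_A) ⊗ 1_I) ≫ s_{WI,A,M.unit} ≫ (θ ⊗ 1_A) = s_{W,A,M.unit}
  have step : M.tensorHom (M.tensorHom (M.runit W) (𝟙 A)) (𝟙 M.unit) ≫
      s (M.tensor W M.unit) A M.unit ≫ M.tensorHom θ (𝟙 A) = s W A M.unit := by
    calc M.tensorHom (M.tensorHom (M.runit W) (𝟙 A)) (𝟙 M.unit) ≫
            s (M.tensor W M.unit) A M.unit ≫ M.tensorHom θ (𝟙 A)
        = (M.tensorHom (M.tensorHom (M.runit W) (𝟙 A)) (𝟙 M.unit) ≫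
            s (M.tensor W M.unit) A M.unit) ≫ M.tensorHom θ (𝟙 A) := by
          simp only [Category.assoc]
      _ = (s W A M.unit ≫ M.tensorHom (M.tensorHom (M.runit W) (𝟙 M.unit)) (𝟙 A)) ≫
            M.tensorHom θ (𝟙 A) := by rw [hnat (M.runit W) (𝟙 A) (𝟙 M.unit)]
      _ = s W A M.unit ≫ M.tensorHom (M.tensorHom (M.runit W) (𝟙 M.unit) ≫ θ) (𝟙 A ≫ 𝟙 A) := by
          rw [M.tensorHom_comp]; simp only [Category.assoc]
      _ = s W A M.unit := by
          have hmu : M.tensorHom (M.runit W) (𝟙 M.unit) ≫ θ = 𝟙 (M.tensor W M.unit) := by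
            rw [hθ]
            have := M.middle_unit W M.unit
            simpa only [Category.assoc] using this
          rw [hmu, Category.comp_id, M.tensorHom_id, Category.comp_id]
  -- conclude
  have hrn := M.runit_natural (M.tensorHom (M.runit W) (𝟙 A))
  calc M.runit (M.tensor W A) ≫ s W A M.unit
      = M.runit (M.tensor W A) ≫
          M.tensorHom (M.tensorHom (M.runit W) (𝟙 A)) (𝟙 M.unit) ≫
          s (M.tensor W M.unit) A M.unit ≫ M.tensorHom θ (𝟙 A) := by rw [step]
    _ = (M.runit (M.tensor W A) ≫ M.tensorHom (M.tensorHom (M.runit W) (𝟙 A)) (𝟙 M.unit)) ≫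
          s (M.tensor W M.unit) A M.unit ≫ M.tensorHom θ (𝟙 A) := by
        simp only [Category.assoc]
    _ = (M.tensorHom (M.runit W) (𝟙 A) ≫ M.runit (M.tensor (M.tensor W M.unit) A)) ≫
          s (M.tensor W M.unit) A M.unit ≫ M.tensorHom θ (𝟙 A) := by rw [hrn]
    _ = M.tensorHom (M.runit W) (𝟙 A) ≫ (M.runit (M.tensor (M.tensor W M.unit) A) ≫
          s (M.tensor W M.unit) A M.unit ≫ M.tensorHom θ (𝟙 A)) := by
        simp only [Category.assoc]
    _ = M.tensorHom (M.runit W) (𝟙 A) := by rw [key, Category.comp_id]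
end

section
/- In a skew monoidal category with a natural isomorphism s : (XA)B → (XB)A satisfying braiding axiom (S3a), the composite XA →^{r} (XA)I →^{s} (XI)A →^{a} X(IA) →^{1ℓ} XA is the identity. -/
open CategoryTheory

universe v u

/-- Proposition: consequence of (S3a).
In a skew monoidal category with a natural isomorphism `s` satisfying (S3a),
the composite `XA →^{r} (XA)I →^{s} (XI)A →^{a} X(IA) →^{1ℓ} XA` is the identity. -/
theorem stmt2 {C : Type u} [Category.{v} C] (M : SkewMonoidalStruct C)
    (s : ∀ X A B : C, M.tensor (M.tensor X A) B ⟶ M.tensor (M.tensor X B) A)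
    (hiso : ∀ X A B : C, IsIso (s X A B))
    (hnat : M.SNatural s) (h3a : M.S3a s) :
    ∀ X A : C,
      M.runit (M.tensor X A) ≫ s X A M.unit ≫ M.assoc X M.unit A ≫
          M.tensorHom (𝟙 X) (M.lunit A) =
        𝟙 (M.tensor X A) := by
  intro X A
  -- Step 1 (eq2): r ≫ s_{XI,A,I} ≫ (a_{X,I,I} ⊗ 1_A) = (1_X ⊗ r_I) ⊗ 1_A
  have eq2 : M.runit (M.tensor (M.tensor X M.unit) A) ≫
      s (M.tensor X M.unit) A M.unit ≫
      M.tensorHom (M.assoc X M.unit M.unit) (𝟙 A) =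
      M.tensorHom (M.tensorHom (𝟙 X) (M.runit M.unit)) (𝟙 A) := by
    haveI := hiso X A M.unit
    rw [← cancel_epi (s X A M.unit)]
    calc s X A M.unit ≫ M.runit (M.tensor (M.tensor X M.unit) A) ≫
          s (M.tensor X M.unit) A M.unit ≫
          M.tensorHom (M.assoc X M.unit M.unit) (𝟙 A)
        = (M.runit (M.tensor (M.tensor X A) M.unit) ≫
            M.tensorHom (s X A M.unit) (𝟙 M.unit)) ≫
          s (M.tensor X M.unit) A M.unit ≫
          M.tensorHom (M.assoc X M.unit M.unit) (𝟙 A) := by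
          rw [M.runit_natural (s X A M.unit)]; simp only [Category.assoc]
      _ = M.runit (M.tensor (M.tensor X A) M.unit) ≫
          (M.tensorHom (s X A M.unit) (𝟙 M.unit) ≫
            s (M.tensor X M.unit) A M.unit ≫
            M.tensorHom (M.assoc X M.unit M.unit) (𝟙 A)) := by
          simp only [Category.assoc]
      _ = (M.runit (M.tensor (M.tensor X A) M.unit) ≫
          M.assoc (M.tensor X A) M.unit M.unit) ≫
          s X A (M.tensor M.unit M.unit) := by
          rw [h3a X A M.unit M.unit]; simp only [Category.assoc]
      _ = M.tensorHom (M.tensorHom (𝟙 X) (𝟙 A)) (M.runit M.unit) ≫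
          s X A (M.tensor M.unit M.unit) := by
          rw [M.runit_assoc (M.tensor X A) M.unit, M.tensorHom_id]
      _ = s X A M.unit ≫ M.tensorHom (M.tensorHom (𝟙 X) (M.runit M.unit)) (𝟙 A) := by
          rw [hnat (𝟙 X) (𝟙 A) (M.runit M.unit)]
  -- Step 2 (diamond): r ≫ s_{XI,A,I} ≫ ((a ≫ (1⊗ℓ)) ⊗ 1_A) = 1
  have diam : M.runit (M.tensor (M.tensor X M.unit) A) ≫
      s (M.tensor X M.unit) A M.unit ≫
      M.tensorHom (M.assoc X M.unit M.unit ≫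
        M.tensorHom (𝟙 X) (M.lunit M.unit)) (𝟙 A) =
      𝟙 (M.tensor (M.tensor X M.unit) A) := by
    have expand : M.tensorHom (M.assoc X M.unit M.unit ≫
        M.tensorHom (𝟙 X) (M.lunit M.unit)) (𝟙 A) =
        M.tensorHom (M.assoc X M.unit M.unit) (𝟙 A) ≫
        M.tensorHom (M.tensorHom (𝟙 X) (M.lunit M.unit)) (𝟙 A) := by
      rw [← M.tensorHom_comp, Category.comp_id]
    have e2 : (M.runit (M.tensor (M.tensor X M.unit) A) ≫
        s (M.tensor X M.unit) A M.unit) ≫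
        M.tensorHom (M.assoc X M.unit M.unit) (𝟙 A) =
        M.tensorHom (M.tensorHom (𝟙 X) (M.runit M.unit)) (𝟙 A) := by
      simp only [Category.assoc]; exact eq2
    rw [expand]
    calc M.runit (M.tensor (M.tensor X M.unit) A) ≫
          s (M.tensor X M.unit) A M.unit ≫
          M.tensorHom (M.assoc X M.unit M.unit) (𝟙 A) ≫
          M.tensorHom (M.tensorHom (𝟙 X) (M.lunit M.unit)) (𝟙 A)
        = ((M.runit (M.tensor (M.tensor X M.unit) A) ≫
            s (M.tensor X M.unit) A M.unit) ≫
          M.tensorHom (M.assoc X M.unit M.unit) (𝟙 A)) ≫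
          M.tensorHom (M.tensorHom (𝟙 X) (M.lunit M.unit)) (𝟙 A) := by
          simp only [Category.assoc]
      _ = M.tensorHom (M.tensorHom (𝟙 X) (M.runit M.unit)) (𝟙 A) ≫
          M.tensorHom (M.tensorHom (𝟙 X) (M.lunit M.unit)) (𝟙 A) := by rw [e2]
      _ = 𝟙 (M.tensor (M.tensor X M.unit) A) := by
          rw [← M.tensorHom_comp, ← M.tensorHom_comp]
          simp only [Category.comp_id, Category.id_comp, M.lunit_runit,
            M.tensorHom_id]
  -- Step 3: r_{XA} ≫ s_{X,A,I} = r_X ⊗ 1_A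
  have keyP : M.runit (M.tensor X A) ≫ s X A M.unit =
      M.tensorHom (M.runit X) (𝟙 A) := by
    symm
    calc M.tensorHom (M.runit X) (𝟙 A)
        = M.tensorHom (M.runit X) (𝟙 A) ≫
          M.runit (M.tensor (M.tensor X M.unit) A) ≫
          s (M.tensor X M.unit) A M.unit ≫
          M.tensorHom (M.assoc X M.unit M.unit ≫
            M.tensorHom (𝟙 X) (M.lunit M.unit)) (𝟙 A) := by
          rw [diam, Category.comp_id]
      _ = (M.runit (M.tensor X A) ≫
          M.tensorHom (M.tensorHom (M.runit X) (𝟙 A)) (𝟙 M.unit)) ≫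
          s (M.tensor X M.unit) A M.unit ≫
          M.tensorHom (M.assoc X M.unit M.unit ≫
            M.tensorHom (𝟙 X) (M.lunit M.unit)) (𝟙 A) := by
          rw [M.runit_natural (M.tensorHom (M.runit X) (𝟙 A))]
          simp only [Category.assoc]
      _ = M.runit (M.tensor X A) ≫
          (M.tensorHom (M.tensorHom (M.runit X) (𝟙 A)) (𝟙 M.unit) ≫
            s (M.tensor X M.unit) A M.unit) ≫
          M.tensorHom (M.assoc X M.unit M.unit ≫
            M.tensorHom (𝟙 X) (M.lunit M.unit)) (𝟙 A) := by
          simp only [Category.assoc]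
      _ = M.runit (M.tensor X A) ≫
          (s X A M.unit ≫
            M.tensorHom (M.tensorHom (M.runit X) (𝟙 M.unit)) (𝟙 A)) ≫
          M.tensorHom (M.assoc X M.unit M.unit ≫
            M.tensorHom (𝟙 X) (M.lunit M.unit)) (𝟙 A) := by
          rw [hnat (M.runit X) (𝟙 A) (𝟙 M.unit)]
      _ = M.runit (M.tensor X A) ≫ s X A M.unit ≫
          M.tensorHom (M.tensorHom (M.runit X) (𝟙 M.unit) ≫
            (M.assoc X M.unit M.unit ≫
              M.tensorHom (𝟙 X) (M.lunit M.unit))) (𝟙 A ≫ 𝟙 A) := by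
          rw [M.tensorHom_comp]; simp only [Category.assoc]
      _ = M.runit (M.tensor X A) ≫ s X A M.unit := by
          rw [Category.comp_id]
          have mu := M.middle_unit X M.unit
          simp only [← Category.assoc]
          simp only [← Category.assoc] at mu
          rw [mu, M.tensorHom_id, Category.comp_id]
  calc M.runit (M.tensor X A) ≫ s X A M.unit ≫ M.assoc X M.unit A ≫
        M.tensorHom (𝟙 X) (M.lunit A)
      = (M.runit (M.tensor X A) ≫ s X A M.unit) ≫ M.assoc X M.unit A ≫
        M.tensorHom (𝟙 X) (M.lunit A) := by simp only [Category.assoc]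
    _ = M.tensorHom (M.runit X) (𝟙 A) ≫ M.assoc X M.unit A ≫
        M.tensorHom (𝟙 X) (M.lunit A) := by rw [keyP]
    _ = 𝟙 (M.tensor X A) := M.middle_unit X A
end

section
/- In a skew monoidal category with a natural isomorphism s : (XA)B → (XB)A satisfying braiding axiom (S3a), the square commutes: (XA)B →^{r⊗1} ((XA)I)B →^{a} (XA)(IB) →^{s} (X(IB))A equals (XA)B →^{s} (XB)A →^{(r1)1} ((XI)B)A →^{a⊗1} (X(IB))A. -/
open CategoryTheory

universe v u

namespace StmtAux

open SkewMonoidalStruct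

variable {C : Type u} [Category.{v} C] (M : SkewMonoidalStruct C)

lemma tensor_comp_id {X X' X'' Y : C} (f : X ⟶ X') (g : X' ⟶ X'') :
    M.tensorHom f (𝟙 Y) ≫ M.tensorHom g (𝟙 Y) = M.tensorHom (f ≫ g) (𝟙 Y) := by
  rw [← M.tensorHom_comp, Category.comp_id]

variable (s : ∀ X A B : C, M.tensor (M.tensor X A) B ⟶ M.tensor (M.tensor X B) A)
  (hiso : ∀ X A B : C, IsIso (s X A B))
  (hnat : M.SNatural s) (h3a : M.S3a s)

include hiso hnat h3a in
lemma dagger (X A : C) :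
    M.runit (M.tensor (M.tensor X M.unit) A) ≫ s (M.tensor X M.unit) A M.unit ≫
      M.tensorHom (M.assoc X M.unit M.unit ≫ M.tensorHom (𝟙 X) (M.lunit M.unit)) (𝟙 A) =
    𝟙 (M.tensor (M.tensor X M.unit) A) := by
  haveI := hiso X A M.unit
  rw [← cancel_epi (s X A M.unit), Category.comp_id, ← tensor_comp_id]
  have hn := hnat (𝟙 X) (𝟙 A) (M.runit M.unit)
  rw [M.tensorHom_id] at hn
  calc s X A M.unit ≫
        M.runit (M.tensor (M.tensor X M.unit) A) ≫
          s (M.tensor X M.unit) A M.unit ≫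
            M.tensorHom (M.assoc X M.unit M.unit) (𝟙 A) ≫
              M.tensorHom (M.tensorHom (𝟙 X) (M.lunit M.unit)) (𝟙 A)
      = M.runit (M.tensor (M.tensor X A) M.unit) ≫
          M.tensorHom (s X A M.unit) (𝟙 M.unit) ≫
            s (M.tensor X M.unit) A M.unit ≫
              M.tensorHom (M.assoc X M.unit M.unit) (𝟙 A) ≫
                M.tensorHom (M.tensorHom (𝟙 X) (M.lunit M.unit)) (𝟙 A) := by
        slice_lhs 1 2 => rw [← M.runit_natural (s X A M.unit)]
        simp only [Category.assoc]
    _ = M.runit (M.tensor (M.tensor X A) M.unit) ≫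
          M.assoc (M.tensor X A) M.unit M.unit ≫
            s X A (M.tensor M.unit M.unit) ≫
              M.tensorHom (M.tensorHom (𝟙 X) (M.lunit M.unit)) (𝟙 A) := by
        slice_lhs 2 4 => rw [h3a X A M.unit M.unit]
        simp only [Category.assoc]
    _ = M.tensorHom (𝟙 (M.tensor X A)) (M.runit M.unit) ≫
          s X A (M.tensor M.unit M.unit) ≫
            M.tensorHom (M.tensorHom (𝟙 X) (M.lunit M.unit)) (𝟙 A) := by
        slice_lhs 1 2 => rw [M.runit_assoc]
        simp only [Category.assoc]
    _ = s X A M.unit ≫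
          M.tensorHom (M.tensorHom (𝟙 X) (M.runit M.unit)) (𝟙 A) ≫
            M.tensorHom (M.tensorHom (𝟙 X) (M.lunit M.unit)) (𝟙 A) := by
        slice_lhs 1 2 => rw [hn]
        simp only [Category.assoc]
    _ = s X A M.unit := by
        rw [tensor_comp_id, ← M.tensorHom_comp, Category.comp_id, M.lunit_runit,
          M.tensorHom_id, M.tensorHom_id, Category.comp_id]

include hiso hnat h3a in
lemma rho_comp (X A : C) :
    M.runit (M.tensor X A) ≫ s X A M.unit = M.tensorHom (M.runit X) (𝟙 A) := by
  have dag := dagger M s hiso hnat h3a X A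
  have hn := hnat (M.runit X) (𝟙 A) (𝟙 M.unit)
  symm
  calc M.tensorHom (M.runit X) (𝟙 A)
      = M.tensorHom (M.runit X) (𝟙 A) ≫
          M.runit (M.tensor (M.tensor X M.unit) A) ≫ s (M.tensor X M.unit) A M.unit ≫
            M.tensorHom (M.assoc X M.unit M.unit ≫ M.tensorHom (𝟙 X) (M.lunit M.unit)) (𝟙 A) := by
        rw [dag, Category.comp_id]
    _ = M.runit (M.tensor X A) ≫
          M.tensorHom (M.tensorHom (M.runit X) (𝟙 A)) (𝟙 M.unit) ≫
            s (M.tensor X M.unit) A M.unit ≫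
              M.tensorHom (M.assoc X M.unit M.unit ≫ M.tensorHom (𝟙 X) (M.lunit M.unit)) (𝟙 A) := by
        slice_lhs 1 2 => rw [← M.runit_natural (M.tensorHom (M.runit X) (𝟙 A))]
        simp only [Category.assoc]
    _ = M.runit (M.tensor X A) ≫
          s X A M.unit ≫
            M.tensorHom (M.tensorHom (M.runit X) (𝟙 M.unit)) (𝟙 A) ≫
              M.tensorHom (M.assoc X M.unit M.unit ≫ M.tensorHom (𝟙 X) (M.lunit M.unit)) (𝟙 A) := by
        slice_lhs 2 3 => rw [hn]
        simp only [Category.assoc]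
    _ = M.runit (M.tensor X A) ≫ s X A M.unit := by
        rw [tensor_comp_id,
          show M.tensorHom (M.runit X) (𝟙 M.unit) ≫
              (M.assoc X M.unit M.unit ≫ M.tensorHom (𝟙 X) (M.lunit M.unit)) =
              𝟙 _ from M.middle_unit X M.unit,
          M.tensorHom_id, Category.comp_id]

include hiso hnat h3a in
theorem stmt3_aux (X A B : C) :
    M.tensorHom (M.runit (M.tensor X A)) (𝟙 B) ≫
        M.assoc (M.tensor X A) M.unit B ≫ s X A (M.tensor M.unit B) =
      s X A B ≫ M.tensorHom (M.tensorHom (M.runit X) (𝟙 B)) (𝟙 A) ≫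
        M.tensorHom (M.assoc X M.unit B) (𝟙 A) := by
  have hn := hnat (M.runit X) (𝟙 A) (𝟙 B)
  symm
  calc s X A B ≫ M.tensorHom (M.tensorHom (M.runit X) (𝟙 B)) (𝟙 A) ≫
        M.tensorHom (M.assoc X M.unit B) (𝟙 A)
      = M.tensorHom (M.tensorHom (M.runit X) (𝟙 A)) (𝟙 B) ≫
          s (M.tensor X M.unit) A B ≫ M.tensorHom (M.assoc X M.unit B) (𝟙 A) := by
        slice_lhs 1 2 => rw [← hn]
        simp only [Category.assoc]
    _ = M.tensorHom (M.runit (M.tensor X A) ≫ s X A M.unit) (𝟙 B) ≫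
          s (M.tensor X M.unit) A B ≫ M.tensorHom (M.assoc X M.unit B) (𝟙 A) := by
        rw [rho_comp M s hiso hnat h3a X A]
    _ = M.tensorHom (M.runit (M.tensor X A)) (𝟙 B) ≫
          M.tensorHom (s X A M.unit) (𝟙 B) ≫
            s (M.tensor X M.unit) A B ≫ M.tensorHom (M.assoc X M.unit B) (𝟙 A) := by
        rw [← tensor_comp_id, Category.assoc]
    _ = M.tensorHom (M.runit (M.tensor X A)) (𝟙 B) ≫
          M.assoc (M.tensor X A) M.unit B ≫ s X A (M.tensor M.unit B) := by
        slice_lhs 2 4 => rw [h3a X A M.unit B]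

end StmtAux

/-- Proposition: consequence of (S3a).
`(XA)B →^{r⊗1} ((XA)I)B →^{a} (XA)(IB) →^{s} (X(IB))A` equals
`(XA)B →^{s} (XB)A →^{(r1)1} ((XI)B)A →^{a⊗1} (X(IB))A`. -/
theorem stmt3 {C : Type u} [Category.{v} C] (M : SkewMonoidalStruct C)
    (s : ∀ X A B : C, M.tensor (M.tensor X A) B ⟶ M.tensor (M.tensor X B) A)
    (hiso : ∀ X A B : C, IsIso (s X A B))
    (hnat : M.SNatural s) (h3a : M.S3a s) :
    ∀ X A B : C,
      M.tensorHom (M.runit (M.tensor X A)) (𝟙 B) ≫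
          M.assoc (M.tensor X A) M.unit B ≫ s X A (M.tensor M.unit B) =
        s X A B ≫ M.tensorHom (M.tensorHom (M.runit X) (𝟙 B)) (𝟙 A) ≫
          M.tensorHom (M.assoc X M.unit B) (𝟙 A) := fun X A B =>
  StmtAux.stmt3_aux M s hiso hnat h3a X A B
end

section
/- In a skew monoidal category with a natural isomorphism s : (XA)B → (XB)A satisfying braiding axiom (S3b) (i.e., axiom (S3a) for s⁻¹: the composite ((XA)B)C →^{s} ((XA)C)B →^{s1} ((XC)A)B →^{a} (XC)(AB) equals ((XA)B)C →^{a1} (X(AB))C →^{s} (XC)(AB)), the triangle WA →^{r⊗1} (WI)A →^{s} (WA)I equals r : WA → (WA)I. -/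
open CategoryTheory

universe v u

/-- Proposition: consequence of (S3b).
In a skew monoidal category with a natural isomorphism `s : (XA)B ⟶ (XB)A`
satisfying (S3b), the triangle `WA →^{r⊗1} (WI)A →^{s} (WA)I` equals `r`. -/
theorem stmt4 {C : Type u} [Category.{v} C] (M : SkewMonoidalStruct C)
    (s : ∀ X A B : C, M.tensor (M.tensor X A) B ⟶ M.tensor (M.tensor X B) A)
    (hiso : ∀ X A B : C, IsIso (s X A B))
    (hnat : M.SNatural s) (h3b : M.S3b s) :
    ∀ W A : C,
      M.tensorHom (M.runit W) (𝟙 A) ≫ s W M.unit A =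
        M.runit (M.tensor W A) := by
  intro W A
  set φ : M.tensor W A ⟶ M.tensor (M.tensor W A) M.unit :=
    M.tensorHom (M.runit W) (𝟙 A) ≫ s W M.unit A with hφ
  -- Key identity, for every B
  have key : ∀ B : C,
      M.tensorHom φ (𝟙 B) ≫ M.assoc (M.tensor W A) M.unit B ≫
        M.tensorHom (𝟙 (M.tensor W A)) (M.lunit B) =
      𝟙 (M.tensor (M.tensor W A) B) := by
    intro B
    haveI := hiso W B A
    rw [← cancel_epi (s W B A), Category.comp_id]
    calc s W B A ≫ M.tensorHom φ (𝟙 B) ≫ M.assoc (M.tensor W A) M.unit B ≫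
          M.tensorHom (𝟙 (M.tensor W A)) (M.lunit B)
        = (s W B A ≫ M.tensorHom (M.tensorHom (M.runit W) (𝟙 A)) (𝟙 B)) ≫
            M.tensorHom (s W M.unit A) (𝟙 B) ≫ M.assoc (M.tensor W A) M.unit B ≫
            M.tensorHom (𝟙 (M.tensor W A)) (M.lunit B) := by
          rw [hφ]
          rw [show (𝟙 B : B ⟶ B) = 𝟙 B ≫ 𝟙 B by simp, M.tensorHom_comp]
          simp [Category.assoc]
      _ = M.tensorHom (M.tensorHom (M.runit W) (𝟙 B)) (𝟙 A) ≫
            (s (M.tensor W M.unit) B A ≫ M.tensorHom (s W M.unit A) (𝟙 B) ≫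
              M.assoc (M.tensor W A) M.unit B) ≫
            M.tensorHom (𝟙 (M.tensor W A)) (M.lunit B) := by
          rw [← hnat (M.runit W) (𝟙 B) (𝟙 A)]
          simp [Category.assoc]
      _ = M.tensorHom (M.tensorHom (M.runit W) (𝟙 B)) (𝟙 A) ≫
            (M.tensorHom (M.assoc W M.unit B) (𝟙 A) ≫ s W (M.tensor M.unit B) A) ≫
            M.tensorHom (𝟙 (M.tensor W A)) (M.lunit B) := by
          rw [h3b W M.unit B A]
      _ = M.tensorHom (M.tensorHom (M.runit W) (𝟙 B)) (𝟙 A) ≫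
            M.tensorHom (M.assoc W M.unit B) (𝟙 A) ≫
            M.tensorHom (M.tensorHom (𝟙 W) (M.lunit B)) (𝟙 A) ≫ s W B A := by
          have := hnat (𝟙 W) (M.lunit B) (𝟙 A)
          rw [M.tensorHom_id] at this
          simp only [Category.assoc]
          rw [← this]
      _ = M.tensorHom
            (M.tensorHom (M.runit W) (𝟙 B) ≫ M.assoc W M.unit B ≫
              M.tensorHom (𝟙 W) (M.lunit B)) (𝟙 A) ≫ s W B A := by
          rw [show (𝟙 A : A ⟶ A) = 𝟙 A ≫ 𝟙 A ≫ 𝟙 A by simp]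
          rw [M.tensorHom_comp, M.tensorHom_comp]
          simp [Category.assoc]
      _ = s W B A := by rw [M.middle_unit, M.tensorHom_id, Category.id_comp]
  -- Conclude using B = M.unit
  have h1 : M.runit (M.tensor W A) = φ := by
    calc M.runit (M.tensor W A)
        = M.runit (M.tensor W A) ≫ M.tensorHom φ (𝟙 M.unit) ≫
            M.assoc (M.tensor W A) M.unit M.unit ≫
            M.tensorHom (𝟙 (M.tensor W A)) (M.lunit M.unit) := by
          rw [key M.unit, Category.comp_id]
      _ = φ ≫ M.runit (M.tensor (M.tensor W A) M.unit) ≫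
            M.assoc (M.tensor W A) M.unit M.unit ≫
            M.tensorHom (𝟙 (M.tensor W A)) (M.lunit M.unit) := by
          rw [← Category.assoc, M.runit_natural φ, Category.assoc]
      _ = φ ≫ M.tensorHom (𝟙 (M.tensor W A)) (M.runit M.unit) ≫
            M.tensorHom (𝟙 (M.tensor W A)) (M.lunit M.unit) := by
          rw [← Category.assoc (M.runit _), M.runit_assoc]
      _ = φ := by
          rw [← M.tensorHom_comp, M.lunit_runit, Category.id_comp, M.tensorHom_id,
            Category.comp_id]
  exact h1.symm
end

section
/- If C is a braided skew monoidal category in which the left unit maps ℓ : IA → A are invertible (left normal), then the right unit maps r : A → AI and the associators a : (XY)Z → X(YZ) are also invertible; that is, C is a monoidal category. -/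
open CategoryTheory

universe v u

namespace SkewMonoidalStruct

variable {C : Type u} [Category.{v} C]

/-- The tensor product of isomorphisms is an isomorphism. -/
theorem isIso_tensorHom (M : SkewMonoidalStruct C) {X X' Y Y' : C}
    (f : X ⟶ X') (g : Y ⟶ Y') [IsIso f] [IsIso g] : IsIso (M.tensorHom f g) :=
  ⟨⟨M.tensorHom (inv f) (inv g),
    by rw [← M.tensorHom_comp, IsIso.hom_inv_id, IsIso.hom_inv_id, M.tensorHom_id],
    by rw [← M.tensorHom_comp, IsIso.inv_hom_id, IsIso.inv_hom_id, M.tensorHom_id]⟩⟩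

/-- Key lemma: the braiding interacts with the right unit map by
`r_{B⊗A} ≫ s_{B,A,I} = r_B ⊗ 1_A`. -/
theorem runit_comp_s (M : SkewMonoidalStruct C)
    (s : ∀ X A B : C, M.tensor (M.tensor X A) B ⟶ M.tensor (M.tensor X B) A)
    (hiso : ∀ X A B : C, IsIso (s X A B)) (hnat : M.SNatural s) (h3a : M.S3a s)
    (hl : ∀ X : C, IsIso (M.lunit X)) (B A : C) :
    M.runit (M.tensor B A) ≫ s B A M.unit = M.tensorHom (M.runit B) (𝟙 A) := by
  haveI := hiso M.unit A B
  haveI := hl B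
  haveI : IsIso (M.tensorHom (M.lunit B) (𝟙 A)) := M.isIso_tensorHom _ _
  -- Step E2, obtained from (S3a) at (I, A, B, I) by precomposing with `r` and
  -- cancelling the iso `s I A B`.
  have E2 : M.runit (M.tensor (M.tensor M.unit B) A) ≫ s (M.tensor M.unit B) A M.unit ≫
        M.tensorHom (M.assoc M.unit B M.unit) (𝟙 A) =
      M.tensorHom (M.tensorHom (𝟙 M.unit) (M.runit B)) (𝟙 A) := by
    apply (cancel_epi (s M.unit A B)).1
    rw [reassoc_of% (M.runit_natural (s M.unit A B)).symm, h3a,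
      reassoc_of% (M.runit_assoc (M.tensor M.unit A) B), ← M.tensorHom_id M.unit A]
    exact hnat (𝟙 M.unit) (𝟙 A) (M.runit B)
  -- Postcompose E2 with `(l ⊗ 1)` and cancel the iso `l_B ⊗ 1_A`.
  apply (cancel_epi (M.tensorHom (M.lunit B) (𝟙 A))).1
  rw [reassoc_of% (M.runit_natural (M.tensorHom (M.lunit B) (𝟙 A))).symm,
    hnat (M.lunit B) (𝟙 A) (𝟙 M.unit), ← M.lunit_assoc B M.unit]
  conv_lhs => rw [show M.tensorHom (M.assoc M.unit B M.unit ≫ M.lunit (M.tensor B M.unit))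
      (𝟙 A) = M.tensorHom (M.assoc M.unit B M.unit) (𝟙 A) ≫
        M.tensorHom (M.lunit (M.tensor B M.unit)) (𝟙 A) from by
      rw [← M.tensorHom_comp, Category.comp_id]]
  rw [reassoc_of% E2]
  conv_lhs => rw [← M.tensorHom_comp, Category.comp_id, M.lunit_natural (M.runit B)]
  rw [show M.tensorHom (M.lunit B ≫ M.runit B) (𝟙 A) =
      M.tensorHom (M.lunit B) (𝟙 A) ≫ M.tensorHom (M.runit B) (𝟙 A) from by
    rw [← M.tensorHom_comp, Category.comp_id]]

end SkewMonoidalStruct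

/-- Proposition: left normal braided skew monoidal categories are monoidal.
If `C` is a braided skew monoidal category whose left unit maps are invertible,
then the right unit maps and the associators are also invertible, i.e. `C` is monoidal. -/
theorem stmt5 {C : Type u} [Category.{v} C] (M : SkewMonoidalStruct C)
    (s : ∀ X A B : C, M.tensor (M.tensor X A) B ⟶ M.tensor (M.tensor X B) A)
    (hiso : ∀ X A B : C, IsIso (s X A B))
    (hnat : M.SNatural s)
    (h2 : M.S2 s) (h3a : M.S3a s) (h3b : M.S3b s) (hstar : M.Sstar s)
    (hl : ∀ X : C, IsIso (M.lunit X)) :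
    (∀ X : C, IsIso (M.runit X)) ∧ (∀ X Y Z : C, IsIso (M.assoc X Y Z)) := by
  constructor
  · -- right unit maps are invertible
    intro X
    haveI := hl X
    haveI := hl M.unit
    haveI := hiso M.unit X M.unit
    haveI : IsIso (M.tensorHom (inv (M.lunit X)) (𝟙 M.unit)) := M.isIso_tensorHom _ _
    haveI : IsIso (M.tensorHom (M.lunit M.unit) (𝟙 X)) := M.isIso_tensorHom _ _
    -- the retraction, a composite of isomorphisms
    have hfac : M.runit X ≫ (M.tensorHom (inv (M.lunit X)) (𝟙 M.unit) ≫ s M.unit X M.unit ≫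
        M.tensorHom (M.lunit M.unit) (𝟙 X) ≫ M.lunit X) = 𝟙 X := by
      rw [reassoc_of% (M.runit_natural (inv (M.lunit X))),
        reassoc_of% (M.runit_comp_s s hiso hnat h3a hl M.unit X),
        reassoc_of% (show M.tensorHom (M.runit M.unit) (𝟙 X) ≫
            M.tensorHom (M.lunit M.unit) (𝟙 X) = 𝟙 (M.tensor M.unit X) from by
          rw [← M.tensorHom_comp, Category.comp_id, M.lunit_runit, M.tensorHom_id]),
        IsIso.inv_hom_id]
    exact IsIso.of_isIso_fac_right hfac
  · -- associators: first `a_{I,A,B}` is invertible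
    have haI : ∀ A B : C, IsIso (M.assoc M.unit A B) := by
      intro A B
      haveI := hl A
      haveI := hl (M.tensor A B)
      haveI : IsIso (M.tensorHom (M.lunit A) (𝟙 B)) := M.isIso_tensorHom _ _
      exact IsIso.of_isIso_fac_right (M.lunit_assoc A B)
    intro X Y Z
    -- next, `a_{I⊗X, Y, Z}` is invertible, using (S3b)
    haveI h1 : IsIso (M.assoc (M.tensor M.unit X) Y Z) := by
      haveI := haI Y Z
      haveI := hiso M.unit (M.tensor Y Z) X
      haveI : IsIso (M.tensorHom (M.assoc M.unit Y Z) (𝟙 X)) := M.isIso_tensorHom _ _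
      haveI := hiso (M.tensor M.unit Y) Z X
      haveI := hiso M.unit Y X
      haveI : IsIso (M.tensorHom (s M.unit Y X) (𝟙 Z)) := M.isIso_tensorHom _ _
      haveI : IsIso (s (M.tensor M.unit Y) Z X ≫ M.tensorHom (s M.unit Y X) (𝟙 Z) ≫
          M.assoc (M.tensor M.unit X) Y Z) := by
        rw [h3b M.unit Y Z X]
        infer_instance
      haveI : IsIso (M.tensorHom (s M.unit Y X) (𝟙 Z) ≫ M.assoc (M.tensor M.unit X) Y Z) :=
        IsIso.of_isIso_comp_left (s (M.tensor M.unit Y) Z X) _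
      exact IsIso.of_isIso_comp_left (M.tensorHom (s M.unit Y X) (𝟙 Z)) _
    -- finally transfer along the iso `(l_X ⊗ 1_Y) ⊗ 1_Z` using naturality of `a`
    haveI := hl X
    haveI : IsIso (M.tensorHom (M.lunit X) (𝟙 Y)) := M.isIso_tensorHom _ _
    haveI : IsIso (M.tensorHom (M.tensorHom (M.lunit X) (𝟙 Y)) (𝟙 Z)) := M.isIso_tensorHom _ _
    haveI : IsIso (M.tensorHom (M.lunit X) (M.tensorHom (𝟙 Y) (𝟙 Z))) := by
      rw [M.tensorHom_id]
      exact M.isIso_tensorHom _ _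
    haveI : IsIso (M.tensorHom (M.tensorHom (M.lunit X) (𝟙 Y)) (𝟙 Z) ≫ M.assoc X Y Z) := by
      rw [M.assoc_natural (M.lunit X) (𝟙 Y) (𝟙 Z)]
      infer_instance
    exact IsIso.of_isIso_comp_left (M.tensorHom (M.tensorHom (M.lunit X) (𝟙 Y)) (𝟙 Z)) _
end

section
/- Let C be a monoidal category. There is a bijection between braidings on C in the classical sense (natural isomorphisms c : BC → CB satisfying the two hexagon axioms) and braidings in the skew sense: natural isomorphisms s : (XA)B → (XB)A satisfying axioms (S2), (S3a), (S3b), and (S*). Under this bijection s is given by the composite (XB)C →^{a} X(BC) →^{1c} X(CB) →^{a⁻¹} (XC)B, and symmetries correspond to symmetries. -/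
open CategoryTheory MonoidalCategory

universe v u

variable (C : Type u) [Category.{v} C] [MonoidalCategory C]

/-- A braiding on a monoidal category in the classical (Joyal–Street) sense:
a natural isomorphism `c : B ⊗ C ≅ C ⊗ B` satisfying the two hexagon axioms. -/
structure ClassicalBraiding where
  c : ∀ X Y : C, X ⊗ Y ≅ Y ⊗ X
  naturality : ∀ {X X' Y Y' : C} (f : X ⟶ X') (g : Y ⟶ Y'),
      (f ⊗ₘ g) ≫ (c X' Y').hom = (c X Y).hom ≫ (g ⊗ₘ f)
  hexagon_forward : ∀ X Y Z : C,
      (α_ X Y Z).hom ≫ (c X (Y ⊗ Z)).hom ≫ (α_ Y Z X).hom =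
        ((c X Y).hom ▷ Z) ≫ (α_ Y X Z).hom ≫ (Y ◁ (c X Z).hom)
  hexagon_reverse : ∀ X Y Z : C,
      (α_ X Y Z).inv ≫ (c (X ⊗ Y) Z).hom ≫ (α_ Z X Y).inv =
        (X ◁ (c Y Z).hom) ≫ (α_ X Z Y).inv ≫ ((c X Z).hom ▷ Y)

/-- A braiding on a monoidal category in the skew sense of Bourke–Lack:
a natural isomorphism `s : (XA)B ≅ (XB)A` satisfying axioms
(S2), (S3a), (S3b) and (S*). -/
structure SkewBraiding where
  s : ∀ X A B : C, (X ⊗ A) ⊗ B ≅ (X ⊗ B) ⊗ A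
  naturality : ∀ {X X' A A' B B' : C} (f : X ⟶ X') (g : A ⟶ A') (h : B ⟶ B'),
      ((f ⊗ₘ g) ⊗ₘ h) ≫ (s X' A' B').hom = (s X A B).hom ≫ ((f ⊗ₘ h) ⊗ₘ g)
  S2 : ∀ X A B Cc : C,
      (s (X ⊗ A) B Cc).hom ≫ ((s X A Cc).hom ▷ B) ≫ (s (X ⊗ Cc) A B).hom =
        ((s X A B).hom ▷ Cc) ≫ (s (X ⊗ B) A Cc).hom ≫ ((s X B Cc).hom ▷ A)
  S3a : ∀ X A B Cc : C,
      ((s X A B).hom ▷ Cc) ≫ (s (X ⊗ B) A Cc).hom ≫ ((α_ X B Cc).hom ▷ A) =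
        (α_ (X ⊗ A) B Cc).hom ≫ (s X A (B ⊗ Cc)).hom
  S3b : ∀ X A B Cc : C,
      (s (X ⊗ A) B Cc).hom ≫ ((s X A Cc).hom ▷ B) ≫ (α_ (X ⊗ Cc) A B).hom =
        ((α_ X A B).hom ▷ Cc) ≫ (s X (A ⊗ B) Cc).hom
  Sstar : ∀ X A B Cc : C,
      ((α_ X A B).hom ▷ Cc) ≫ (α_ X (A ⊗ B) Cc).hom ≫ (X ◁ (s A B Cc).hom) =
        (s (X ⊗ A) B Cc).hom ≫ ((α_ X A Cc).hom ▷ B) ≫ (α_ X (A ⊗ Cc) B).hom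

namespace Stmt6Aux

variable {C}

/-! ### From classical to skew -/

/-- A classical braiding gives a `BraidedCategory` structure. -/
def braidedOf (b : ClassicalBraiding C) : BraidedCategory C where
  braiding := b.c
  braiding_naturality_right := by
    intro X Y Z f
    have := b.naturality (𝟙 X) f
    simpa using this
  braiding_naturality_left := by
    intro X Y f Z
    have := b.naturality f (𝟙 Z)
    simpa using this
  hexagon_forward := b.hexagon_forward
  hexagon_reverse := b.hexagon_reverse

section Braided
open BraidedCategory
variable [BraidedCategory C]

/-- The skew braiding associated to a braiding. -/
def sk (X A B : C) : (X ⊗ A) ⊗ B ≅ (X ⊗ B) ⊗ A :=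
  α_ X A B ≪≫ whiskerLeftIso X (β_ A B) ≪≫ (α_ X B A).symm

lemma sk_nat {X X' A A' B B' : C} (f : X ⟶ X') (g : A ⟶ A') (h : B ⟶ B') :
    ((f ⊗ₘ g) ⊗ₘ h) ≫ (sk X' A' B').hom = (sk X A B).hom ≫ ((f ⊗ₘ h) ⊗ₘ g) := by
  simp only [sk, Iso.trans_hom, whiskerLeftIso_hom, Iso.symm_hom,
    associator_naturality_assoc]
  rw [tensorHom_def f (g ⊗ₘ h), Category.assoc, ← MonoidalCategory.whiskerLeft_comp_assoc,
    braiding_naturality, MonoidalCategory.whiskerLeft_comp_assoc,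
    ← whisker_exchange_assoc, ← tensorHom_def_assoc, associator_inv_naturality]
  simp

lemma hexf (A B Cc : C) : (β_ A (B ⊗ Cc)).hom =
    (α_ A B Cc).inv ≫ ((β_ A B).hom ▷ Cc) ≫ (α_ B A Cc).hom ≫
      (B ◁ (β_ A Cc).hom) ≫ (α_ B Cc A).inv := by
  have := hexagon_forward A B Cc
  rw [← cancel_epi (α_ A B Cc).hom, ← cancel_mono (α_ B Cc A).hom]
  simp only [Category.assoc] at this ⊢
  simpa using this

lemma hexr (A B Cc : C) : (β_ (A ⊗ B) Cc).hom =
    (α_ A B Cc).hom ≫ (A ◁ (β_ B Cc).hom) ≫ (α_ A Cc B).inv ≫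
      ((β_ A Cc).hom ▷ B) ≫ (α_ Cc A B).hom := by
  have := hexagon_reverse A B Cc
  rw [← cancel_epi (α_ A B Cc).inv, ← cancel_mono (α_ Cc A B).inv]
  simp only [Category.assoc] at this ⊢
  simpa using this

lemma sk_S3a (X A B Cc : C) :
    ((sk X A B).hom ▷ Cc) ≫ (sk (X ⊗ B) A Cc).hom ≫ ((α_ X B Cc).hom ▷ A) =
      (α_ (X ⊗ A) B Cc).hom ≫ (sk X A (B ⊗ Cc)).hom := by
  simp only [sk, Iso.trans_hom, whiskerLeftIso_hom, Iso.symm_hom, hexf]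
  monoidal

lemma sk_S3b (X A B Cc : C) :
    (sk (X ⊗ A) B Cc).hom ≫ ((sk X A Cc).hom ▷ B) ≫ (α_ (X ⊗ Cc) A B).hom =
      ((α_ X A B).hom ▷ Cc) ≫ (sk X (A ⊗ B) Cc).hom := by
  simp only [sk, Iso.trans_hom, whiskerLeftIso_hom, Iso.symm_hom, hexr]
  monoidal

lemma sk_Sstar (X A B Cc : C) :
    ((α_ X A B).hom ▷ Cc) ≫ (α_ X (A ⊗ B) Cc).hom ≫ (X ◁ (sk A B Cc).hom) =
      (sk (X ⊗ A) B Cc).hom ≫ ((α_ X A Cc).hom ▷ B) ≫ (α_ X (A ⊗ Cc) B).hom := by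
  simp only [sk, Iso.trans_hom, whiskerLeftIso_hom, Iso.symm_hom]
  monoidal

lemma sk_S2 (X A B Cc : C) :
    (sk (X ⊗ A) B Cc).hom ≫ ((sk X A Cc).hom ▷ B) ≫ (sk (X ⊗ Cc) A B).hom =
      ((sk X A B).hom ▷ Cc) ≫ (sk (X ⊗ B) A Cc).hom ≫ ((sk X B Cc).hom ▷ A) := by
  have h1 : (sk (X ⊗ A) B Cc).hom ≫ ((sk X A Cc).hom ▷ B) ≫ (sk (X ⊗ Cc) A B).hom =
      (α_ (X ⊗ A) B Cc).hom ≫ (α_ X A (B ⊗ Cc)).hom ≫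
      X ◁ (A ◁ (β_ B Cc).hom ≫ (α_ A Cc B).inv ≫ (β_ A Cc).hom ▷ B ≫
        (α_ Cc A B).hom ≫ Cc ◁ (β_ A B).hom) ≫
      (X ◁ (α_ Cc B A).inv) ≫ (α_ X (Cc ⊗ B) A).inv ≫ ((α_ X Cc B).inv ▷ A) := by
    simp only [sk, Iso.trans_hom, whiskerLeftIso_hom, Iso.symm_hom]
    monoidal
  have h2 : ((sk X A B).hom ▷ Cc) ≫ (sk (X ⊗ B) A Cc).hom ≫ ((sk X B Cc).hom ▷ A) =
      (α_ (X ⊗ A) B Cc).hom ≫ (α_ X A (B ⊗ Cc)).hom ≫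
      X ◁ ((α_ A B Cc).inv ≫ (β_ A B).hom ▷ Cc ≫ (α_ B A Cc).hom ≫
        B ◁ (β_ A Cc).hom ≫ (α_ B Cc A).inv ≫ (β_ B Cc).hom ▷ A ≫ (α_ Cc B A).hom) ≫
      (X ◁ (α_ Cc B A).inv) ≫ (α_ X (Cc ⊗ B) A).inv ≫ ((α_ X Cc B).inv ▷ A) := by
    simp only [sk, Iso.trans_hom, whiskerLeftIso_hom, Iso.symm_hom]
    monoidal
  rw [h1, h2, ← yang_baxter A B Cc]

end Braided

/-- The forward map of the bijection. -/
def toSkew (b : ClassicalBraiding C) : SkewBraiding C :=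
  letI : BraidedCategory C := braidedOf b
  { s := fun X A B => sk X A B
    naturality := fun f g h => sk_nat f g h
    S2 := sk_S2
    S3a := sk_S3a
    S3b := sk_S3b
    Sstar := sk_Sstar }

lemma toSkew_s (b : ClassicalBraiding C) (X A B : C) :
    ((toSkew b).s X A B).hom =
      (α_ X A B).hom ≫ (X ◁ (b.c A B).hom) ≫ (α_ X B A).inv := by
  rfl

/-! ### From skew to classical -/

/-- The braiding recovered from a skew braiding. -/
def ccOf (t : SkewBraiding C) (A B : C) : A ⊗ B ≅ B ⊗ A :=
  whiskerRightIso (λ_ A).symm B ≪≫ t.s (𝟙_ C) A B ≪≫ whiskerRightIso (λ_ B) A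

/-- Key lemma: a skew braiding is determined by its unit component. -/
lemma skey (t : SkewBraiding C) (X A B : C) :
    (t.s X A B).hom = (α_ X A B).hom ≫ (X ◁ (ccOf t A B).hom) ≫ (α_ X B A).inv := by
  have hnat := t.naturality (ρ_ X).inv (𝟙 A) (𝟙 B)
  simp only [tensorHom_id, id_tensorHom] at hnat
  have hnat' : (t.s (X ⊗ 𝟙_ C) A B).hom =
      (((ρ_ X).hom ▷ A) ▷ B) ≫ (t.s X A B).hom ≫ (((ρ_ X).inv ▷ B) ▷ A) := by
    rw [← hnat]; simp [← comp_whiskerRight_assoc, ← comp_whiskerRight]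
  have hstar := t.Sstar X (𝟙_ C) A B
  rw [hnat'] at hstar
  have hX : X ◁ (t.s (𝟙_ C) A B).hom =
      (α_ X (𝟙_ C ⊗ A) B).inv ≫ ((α_ X (𝟙_ C) A).inv ▷ B) ≫
      ((((ρ_ X).hom ▷ A) ▷ B) ≫ (t.s X A B).hom ≫ (((ρ_ X).inv ▷ B) ▷ A)) ≫
      ((α_ X (𝟙_ C) B).hom ▷ A) ≫ (α_ X (𝟙_ C ⊗ B) A).hom := by
    rw [← hstar]; simp
  simp only [ccOf, Iso.trans_hom, whiskerRightIso_hom, Iso.symm_hom,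
    MonoidalCategory.whiskerLeft_comp, hX]
  monoidal

lemma unit_whiskerLeft_cancel {P Q : C} {f g : P ⟶ Q}
    (h : 𝟙_ C ◁ f = 𝟙_ C ◁ g) : f = g := by
  have : (λ_ P).inv ≫ (𝟙_ C ◁ f) ≫ (λ_ Q).hom =
      (λ_ P).inv ≫ (𝟙_ C ◁ g) ≫ (λ_ Q).hom := by rw [h]
  simpa [MonoidalCategory.id_whiskerLeft] using this

lemma ccOf_nat (t : SkewBraiding C) {X X' Y Y' : C} (f : X ⟶ X') (g : Y ⟶ Y') :
    (f ⊗ₘ g) ≫ (ccOf t X' Y').hom = (ccOf t X Y).hom ≫ (g ⊗ₘ f) := by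
  simp only [ccOf, Iso.trans_hom, whiskerRightIso_hom, Iso.symm_hom]
  have e1 : (f ⊗ₘ g) ≫ ((λ_ X').inv ▷ Y') = ((λ_ X).inv ▷ Y) ≫ ((𝟙 (𝟙_ C) ⊗ₘ f) ⊗ₘ g) := by
    rw [← tensorHom_id ((λ_ X').inv) Y', ← tensorHom_id ((λ_ X).inv) Y,
      tensorHom_comp_tensorHom, tensorHom_comp_tensorHom, Category.comp_id, Category.id_comp,
      leftUnitor_inv_naturality, id_tensorHom]
  have e2 : ((𝟙 (𝟙_ C) ⊗ₘ g) ⊗ₘ f) ≫ ((λ_ Y').hom ▷ X') = ((λ_ Y).hom ▷ X) ≫ (g ⊗ₘ f) := by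
    rw [← tensorHom_id ((λ_ Y').hom) X', ← tensorHom_id ((λ_ Y).hom) X,
      tensorHom_comp_tensorHom, tensorHom_comp_tensorHom, Category.comp_id, Category.id_comp,
      id_tensorHom, leftUnitor_naturality]
  rw [← Category.assoc, e1, Category.assoc, reassoc_of% (t.naturality (𝟙 (𝟙_ C)) f g), e2]
  simp

lemma ccOf_hexf (t : SkewBraiding C) (A B Cc : C) :
    (α_ A B Cc).hom ≫ (ccOf t A (B ⊗ Cc)).hom ≫ (α_ B Cc A).hom =
      ((ccOf t A B).hom ▷ Cc) ≫ (α_ B A Cc).hom ≫ (B ◁ (ccOf t A Cc).hom) := by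
  apply unit_whiskerLeft_cancel
  have e1 : 𝟙_ C ◁ ((α_ A B Cc).hom ≫ (ccOf t A (B ⊗ Cc)).hom ≫ (α_ B Cc A).hom) =
      ((α_ (𝟙_ C) (A ⊗ B) Cc).inv ≫ ((α_ (𝟙_ C) A B).inv ▷ Cc)) ≫
        ((α_ (𝟙_ C ⊗ A) B Cc).hom ≫ (t.s (𝟙_ C) A (B ⊗ Cc)).hom) ≫
        ((α_ (𝟙_ C) (B ⊗ Cc) A).hom ≫ (𝟙_ C ◁ (α_ B Cc A).hom)) := by
    rw [skey t (𝟙_ C) A (B ⊗ Cc)]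
    simp only [MonoidalCategory.whiskerLeft_comp]
    monoidal
  have e2 : 𝟙_ C ◁ (((ccOf t A B).hom ▷ Cc) ≫ (α_ B A Cc).hom ≫ (B ◁ (ccOf t A Cc).hom)) =
      ((α_ (𝟙_ C) (A ⊗ B) Cc).inv ≫ ((α_ (𝟙_ C) A B).inv ▷ Cc)) ≫
        (((t.s (𝟙_ C) A B).hom ▷ Cc) ≫ (t.s (𝟙_ C ⊗ B) A Cc).hom ≫
          ((α_ (𝟙_ C) B Cc).hom ▷ A)) ≫
        ((α_ (𝟙_ C) (B ⊗ Cc) A).hom ≫ (𝟙_ C ◁ (α_ B Cc A).hom)) := by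
    rw [skey t (𝟙_ C) A B, skey t (𝟙_ C ⊗ B) A Cc]
    simp only [MonoidalCategory.whiskerLeft_comp]
    monoidal
  rw [e1, e2, t.S3a]

lemma ccOf_hexr (t : SkewBraiding C) (A B Cc : C) :
    (α_ A B Cc).inv ≫ (ccOf t (A ⊗ B) Cc).hom ≫ (α_ Cc A B).inv =
      (A ◁ (ccOf t B Cc).hom) ≫ (α_ A Cc B).inv ≫ ((ccOf t A Cc).hom ▷ B) := by
  apply unit_whiskerLeft_cancel
  have e1 : 𝟙_ C ◁ ((α_ A B Cc).inv ≫ (ccOf t (A ⊗ B) Cc).hom ≫ (α_ Cc A B).inv) =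
      ((α_ (𝟙_ C) A (B ⊗ Cc)).inv ≫ (α_ (𝟙_ C ⊗ A) B Cc).inv) ≫
        (((α_ (𝟙_ C) A B).hom ▷ Cc) ≫ (t.s (𝟙_ C) (A ⊗ B) Cc).hom) ≫
        ((α_ (𝟙_ C) Cc (A ⊗ B)).hom ≫ (𝟙_ C ◁ (α_ Cc A B).inv)) := by
    rw [skey t (𝟙_ C) (A ⊗ B) Cc]
    simp only [MonoidalCategory.whiskerLeft_comp]
    monoidal
  have e2 : 𝟙_ C ◁ ((A ◁ (ccOf t B Cc).hom) ≫ (α_ A Cc B).inv ≫ ((ccOf t A Cc).hom ▷ B)) =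
      ((α_ (𝟙_ C) A (B ⊗ Cc)).inv ≫ (α_ (𝟙_ C ⊗ A) B Cc).inv) ≫
        ((t.s (𝟙_ C ⊗ A) B Cc).hom ≫ ((t.s (𝟙_ C) A Cc).hom ▷ B) ≫
          (α_ (𝟙_ C ⊗ Cc) A B).hom) ≫
        ((α_ (𝟙_ C) Cc (A ⊗ B)).hom ≫ (𝟙_ C ◁ (α_ Cc A B).inv)) := by
    rw [skey t (𝟙_ C ⊗ A) B Cc, skey t (𝟙_ C) A Cc]
    simp only [MonoidalCategory.whiskerLeft_comp]
    monoidal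
  rw [e1, e2, t.S3b]

/-- The inverse map of the bijection. -/
def toClassical (t : SkewBraiding C) : ClassicalBraiding C where
  c := ccOf t
  naturality := ccOf_nat t
  hexagon_forward := ccOf_hexf t
  hexagon_reverse := ccOf_hexr t

lemma ClassicalBraiding.ext' {b b' : ClassicalBraiding C} (h : b.c = b'.c) : b = b' := by
  cases b; cases b'; cases h; rfl

lemma SkewBraiding.ext' {t t' : SkewBraiding C} (h : t.s = t'.s) : t = t' := by
  cases t; cases t'; cases h; rfl

lemma ccOf_toSkew (b : ClassicalBraiding C) (A B : C) :
    ccOf (toSkew b) A B = b.c A B := by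
  apply Iso.ext
  simp only [ccOf, Iso.trans_hom, whiskerRightIso_hom, Iso.symm_hom, toSkew_s]
  monoidal

end Stmt6Aux

/-- Proposition 2.3: for a monoidal category `C`, braidings in the
classical sense are in bijection with braidings in the skew sense; under the
bijection `s` is `(XB)C →^{a} X(BC) →^{1c} X(CB) →^{a⁻¹} (XC)B`, and symmetries
correspond to symmetries. -/
theorem stmt6 :
    ∃ E : ClassicalBraiding C ≃ SkewBraiding C,
      (∀ (b : ClassicalBraiding C) (X A B : C),
        ((E b).s X A B).hom =
          (α_ X A B).hom ≫ (X ◁ (b.c A B).hom) ≫ (α_ X B A).inv) ∧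
      (∀ b : ClassicalBraiding C,
        (∀ X Y : C, (b.c X Y).hom ≫ (b.c Y X).hom = 𝟙 (X ⊗ Y)) ↔
        (∀ X A B : C, ((E b).s X A B).hom ≫ ((E b).s X B A).hom = 𝟙 ((X ⊗ A) ⊗ B))) := by
  refine ⟨⟨Stmt6Aux.toSkew, Stmt6Aux.toClassical, ?_, ?_⟩, ?_, ?_⟩
  · intro b
    apply Stmt6Aux.ClassicalBraiding.ext'
    funext A B
    exact Stmt6Aux.ccOf_toSkew b A B
  · intro t
    apply Stmt6Aux.SkewBraiding.ext'
    funext X A B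
    apply Iso.ext
    rw [Stmt6Aux.toSkew_s]
    exact (Stmt6Aux.skey t X A B).symm
  · intro b X A B
    exact Stmt6Aux.toSkew_s b X A B
  · intro b
    simp only [Equiv.coe_fn_mk]
    constructor
    · intro hc X A B
      rw [Stmt6Aux.toSkew_s, Stmt6Aux.toSkew_s]
      simp only [Category.assoc, Iso.inv_hom_id_assoc,
        ← MonoidalCategory.whiskerLeft_comp_assoc, hc]
      simp
    · intro hs X Y
      have h := hs (𝟙_ C) X Y
      have key : (Stmt6Aux.ccOf (Stmt6Aux.toSkew b) X Y).hom ≫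
          (Stmt6Aux.ccOf (Stmt6Aux.toSkew b) Y X).hom = 𝟙 (X ⊗ Y) := by
        simp only [Stmt6Aux.ccOf, Iso.trans_hom, whiskerRightIso_hom, Iso.symm_hom,
          Category.assoc, hom_inv_whiskerRight_assoc]
        rw [reassoc_of% h]
        simp
      rw [← Stmt6Aux.ccOf_toSkew b X Y, ← Stmt6Aux.ccOf_toSkew b Y X]
      exact key
end

section
/- In a skew closed category with a natural isomorphism s' : [B,[A,Y]] → [A,[B,Y]] satisfying axiom (S3') — the pentagon relating s' with L : [B,C] → [[A,B],[A,C]] — the triangle [I,[B,C]] →^{s'} [B,[I,C]] →^{[1,i]} [B,C] equals i : [I,[B,C]] → [B,C]. -/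
open CategoryTheory

universe v u

/-- A skew closed category in the sense of Street: an internal hom `[−,−]`,
a unit `I`, and structure maps `L : [B,C] ⟶ [[A,B],[A,C]]`, `i : [I,A] ⟶ A`,
`j : I ⟶ [A,A]` satisfying Street's five coherence axioms. -/
structure SkewClosedStruct (C : Type u) [Category.{v} C] where
  ihom : C → C → C
  ihomMap : ∀ {A' A B B' : C}, (A' ⟶ A) → (B ⟶ B') → (ihom A B ⟶ ihom A' B')
  ihomMap_id : ∀ A B : C, ihomMap (𝟙 A) (𝟙 B) = 𝟙 (ihom A B)
  ihomMap_comp : ∀ {A'' A' A B B' B'' : C}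
      (f : A' ⟶ A) (f' : A'' ⟶ A') (g : B ⟶ B') (g' : B' ⟶ B''),
      ihomMap (f' ≫ f) (g ≫ g') = ihomMap f g ≫ ihomMap f' g'
  unit : C
  L : ∀ A B Cc : C, ihom B Cc ⟶ ihom (ihom A B) (ihom A Cc)
  i : ∀ A : C, ihom unit A ⟶ A
  j : ∀ A : C, unit ⟶ ihom A A
  L_natural : ∀ {A B' B Cc Cc' : C} (f : B' ⟶ B) (g : Cc ⟶ Cc'),
      ihomMap f g ≫ L A B' Cc' =
        L A B Cc ≫ ihomMap (ihomMap (𝟙 A) f) (ihomMap (𝟙 A) g)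
  L_dinatural : ∀ {A A' B Cc : C} (f : A' ⟶ A),
      L A B Cc ≫ ihomMap (𝟙 (ihom A B)) (ihomMap f (𝟙 Cc)) =
        L A' B Cc ≫ ihomMap (ihomMap f (𝟙 B)) (𝟙 (ihom A' Cc))
  i_natural : ∀ {A A' : C} (f : A ⟶ A'),
      ihomMap (𝟙 unit) f ≫ i A' = i A ≫ f
  j_dinatural : ∀ {A A' : C} (f : A ⟶ A'),
      j A ≫ ihomMap (𝟙 A) f = j A' ≫ ihomMap f (𝟙 A')
  ax1 : ∀ A B : C,
      L A A B ≫ ihomMap (j A) (𝟙 (ihom A B)) ≫ i (ihom A B) = 𝟙 (ihom A B)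
  ax2 : ∀ A B : C, j B ≫ L A B B = j (ihom A B)
  ax3 : ∀ A B Cc D : C,
      L A Cc D ≫ L (ihom A B) (ihom A Cc) (ihom A D) ≫
          ihomMap (L A B Cc) (𝟙 (ihom (ihom A B) (ihom A D))) =
        L B Cc D ≫ ihomMap (𝟙 (ihom B Cc)) (L A B D)
  ax4 : ∀ B Cc : C,
      L unit B Cc ≫ ihomMap (𝟙 (ihom unit B)) (i Cc) = ihomMap (i B) (𝟙 Cc)
  ax5 : j unit ≫ i unit = 𝟙 unit

namespace SkewClosedStruct

variable {C : Type u} [Category.{v} C] (M : SkewClosedStruct C)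

/-- Naturality (in all three variables) for a family
`s' : [B,[A,Y]] ⟶ [A,[B,Y]]`. -/
def S'Natural (s' : ∀ B A Y : C, M.ihom B (M.ihom A Y) ⟶ M.ihom A (M.ihom B Y)) : Prop :=
  ∀ {B' B A' A Y Y' : C} (f : B' ⟶ B) (g : A' ⟶ A) (h : Y ⟶ Y'),
    M.ihomMap f (M.ihomMap g h) ≫ s' B' A' Y' =
      s' B A Y ≫ M.ihomMap g (M.ihomMap f h)

/-- Axiom (S3') of a braiding on a skew closed category: the pentagon
`[B,[A,Y]] →^{L} [[C,B],[C,[A,Y]]] →^{[1,s']} [[C,B],[A,[C,Y]]] →^{s'} [A,[[C,B],[C,Y]]]`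
equals `[B,[A,Y]] →^{s'} [A,[B,Y]] →^{[1,L]} [A,[[C,B],[C,Y]]]`. -/
def S3' (s' : ∀ B A Y : C, M.ihom B (M.ihom A Y) ⟶ M.ihom A (M.ihom B Y)) : Prop :=
  ∀ B A Y Cc : C,
    M.L Cc B (M.ihom A Y) ≫
        M.ihomMap (𝟙 (M.ihom Cc B)) (s' Cc A Y) ≫
        s' (M.ihom Cc B) A (M.ihom Cc Y) =
      s' B A Y ≫ M.ihomMap (𝟙 A) (M.L Cc B Y)

end SkewClosedStruct

/-- Proposition: unit compatibility is a consequence of (S3').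
In a skew closed category with a natural isomorphism `s' : [B,[A,Y]] ⟶ [A,[B,Y]]`
satisfying (S3'), the triangle `[I,[B,C]] →^{s'} [B,[I,C]] →^{[1,i]} [B,C]`
equals `i`. -/
theorem stmt8 {C : Type u} [Category.{v} C] (M : SkewClosedStruct C)
    (s' : ∀ B A Y : C, M.ihom B (M.ihom A Y) ⟶ M.ihom A (M.ihom B Y))
    (hiso : ∀ B A Y : C, IsIso (s' B A Y))
    (hnat : M.S'Natural s') (h3 : M.S3' s') :
    ∀ B Cc : C,
      s' M.unit B Cc ≫ M.ihomMap (𝟙 B) (M.i Cc) = M.i (M.ihom B Cc) := by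
  intro B Cc
  -- functoriality helpers
  have dec : ∀ {A' A Y Y' : C} (g : A' ⟶ A) (h : Y ⟶ Y'),
      M.ihomMap (𝟙 A) h ≫ M.ihomMap g (𝟙 Y') = M.ihomMap g h := by
    intro _ _ _ _ g h
    rw [← M.ihomMap_comp, Category.comp_id, Category.comp_id]
  have dec' : ∀ {A' A Y Y' : C} (g : A' ⟶ A) (h : Y ⟶ Y'),
      M.ihomMap g (𝟙 Y) ≫ M.ihomMap (𝟙 A') h = M.ihomMap g h := by
    intro _ _ _ _ g h
    rw [← M.ihomMap_comp, Category.id_comp, Category.id_comp]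
  have idcomp : ∀ {A Y Y' Y'' : C} (h : Y ⟶ Y') (h' : Y' ⟶ Y''),
      M.ihomMap (𝟙 A) (h ≫ h') = M.ihomMap (𝟙 A) h ≫ M.ihomMap (𝟙 A) h' := by
    intro A _ _ _ h h'
    rw [← M.ihomMap_comp, Category.comp_id]
  -- Key step: `L ≫ [1, s' ≫ [1,i]] = L ≫ [1, i]` on `[B,Cc]`.
  have key : M.L M.unit M.unit (M.ihom B Cc) ≫
        M.ihomMap (𝟙 (M.ihom M.unit M.unit))
          (s' M.unit B Cc ≫ M.ihomMap (𝟙 B) (M.i Cc)) =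
      M.L M.unit M.unit (M.ihom B Cc) ≫
        M.ihomMap (𝟙 (M.ihom M.unit M.unit)) (M.i (M.ihom B Cc)) := by
    rw [M.ax4 M.unit (M.ihom B Cc)]
    haveI := hiso (M.ihom M.unit M.unit) B Cc
    rw [← cancel_mono (s' (M.ihom M.unit M.unit) B Cc)]
    have eqB := hnat (M.i M.unit) (𝟙 B) (𝟙 Cc)
    rw [M.ihomMap_id] at eqB
    rw [eqB, idcomp]
    simp only [Category.assoc]
    have eqA := hnat (𝟙 (M.ihom M.unit M.unit)) (𝟙 B) (M.i Cc)
    rw [eqA]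
    have h' := congrArg
      (· ≫ M.ihomMap (𝟙 B) (M.ihomMap (𝟙 (M.ihom M.unit M.unit)) (M.i Cc)))
      (h3 M.unit B Cc M.unit)
    simp only [Category.assoc] at h'
    rw [h', ← idcomp, M.ax4]
  -- `L ≫ [1,g] ≫ [j,1] ≫ i = g` for any `g : [I,[B,Cc]] ⟶ [B,Cc]`.
  have step : ∀ g : M.ihom M.unit (M.ihom B Cc) ⟶ M.ihom B Cc,
      M.L M.unit M.unit (M.ihom B Cc) ≫
        M.ihomMap (𝟙 (M.ihom M.unit M.unit)) g ≫
        M.ihomMap (M.j M.unit) (𝟙 (M.ihom B Cc)) ≫ M.i (M.ihom B Cc) = g := by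
    intro g
    calc M.L M.unit M.unit (M.ihom B Cc) ≫
          M.ihomMap (𝟙 (M.ihom M.unit M.unit)) g ≫
          M.ihomMap (M.j M.unit) (𝟙 (M.ihom B Cc)) ≫ M.i (M.ihom B Cc)
        = M.L M.unit M.unit (M.ihom B Cc) ≫
          (M.ihomMap (𝟙 (M.ihom M.unit M.unit)) g ≫
            M.ihomMap (M.j M.unit) (𝟙 (M.ihom B Cc))) ≫ M.i (M.ihom B Cc) := by
          simp only [Category.assoc]
      _ = M.L M.unit M.unit (M.ihom B Cc) ≫
          M.ihomMap (M.j M.unit) g ≫ M.i (M.ihom B Cc) := by rw [dec]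
      _ = M.L M.unit M.unit (M.ihom B Cc) ≫
          (M.ihomMap (M.j M.unit) (𝟙 (M.ihom M.unit (M.ihom B Cc))) ≫
            M.ihomMap (𝟙 M.unit) g) ≫ M.i (M.ihom B Cc) := by rw [dec']
      _ = M.L M.unit M.unit (M.ihom B Cc) ≫
          M.ihomMap (M.j M.unit) (𝟙 (M.ihom M.unit (M.ihom B Cc))) ≫
          M.i (M.ihom M.unit (M.ihom B Cc)) ≫ g := by
          simp only [Category.assoc, M.i_natural]
      _ = (M.L M.unit M.unit (M.ihom B Cc) ≫
          M.ihomMap (M.j M.unit) (𝟙 (M.ihom M.unit (M.ihom B Cc))) ≫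
          M.i (M.ihom M.unit (M.ihom B Cc))) ≫ g := by simp only [Category.assoc]
      _ = g := by rw [M.ax1, Category.id_comp]
  calc s' M.unit B Cc ≫ M.ihomMap (𝟙 B) (M.i Cc)
      = M.L M.unit M.unit (M.ihom B Cc) ≫
        M.ihomMap (𝟙 (M.ihom M.unit M.unit))
          (s' M.unit B Cc ≫ M.ihomMap (𝟙 B) (M.i Cc)) ≫
        M.ihomMap (M.j M.unit) (𝟙 (M.ihom B Cc)) ≫ M.i (M.ihom B Cc) :=
        (step _).symm
    _ = M.L M.unit M.unit (M.ihom B Cc) ≫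
        M.ihomMap (𝟙 (M.ihom M.unit M.unit)) (M.i (M.ihom B Cc)) ≫
        M.ihomMap (M.j M.unit) (𝟙 (M.ihom B Cc)) ≫ M.i (M.ihom B Cc) := by
        rw [← Category.assoc, key, Category.assoc]
    _ = M.i (M.ihom B Cc) := step _
end

section
/- In a skew closed category satisfying axiom (S3') for a natural isomorphism s' : [B,[A,Y]] → [A,[B,Y]], the composite [B,C] →^{L} [[B,B],[B,C]] →^{[j,1]} [I,[B,C]] →^{s'} [B,[I,C]] →^{[1,i]} [B,C] is the identity. In particular, axiom (S4) of Bourke's definition of symmetric skew closed category is redundant. -/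
open CategoryTheory

universe v u

/-- Corollary: redundancy of axiom (S4) of Bourke's symmetric skew
closed categories. In a skew closed category with a natural isomorphism
`s' : [B,[A,Y]] ⟶ [A,[B,Y]]` satisfying (S3'), the composite
`[B,C] →^{L} [[B,B],[B,C]] →^{[j,1]} [I,[B,C]] →^{s'} [B,[I,C]] →^{[1,i]} [B,C]`
is the identity. -/
theorem stmt9 {C : Type u} [Category.{v} C] (M : SkewClosedStruct C)
    (s' : ∀ B A Y : C, M.ihom B (M.ihom A Y) ⟶ M.ihom A (M.ihom B Y))
    (hiso : ∀ B A Y : C, IsIso (s' B A Y))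
    (hnat : M.S'Natural s') (h3 : M.S3' s') :
    ∀ B Cc : C,
      M.L B B Cc ≫ M.ihomMap (M.j B) (𝟙 (M.ihom B Cc)) ≫
          s' M.unit B Cc ≫ M.ihomMap (𝟙 B) (M.i Cc) =
        𝟙 (M.ihom B Cc) := by
  intro B Cc
  -- Abbreviation: ψ := s' I B Cc ≫ [1_B, i_Cc]
  -- Step 1: L I I [B,Cc] ≫ [1, ψ] = [i_I, 1]
  have hcomp_r : ∀ {A X Y Z : C} (g : X ⟶ Y) (h : Y ⟶ Z),
      M.ihomMap (𝟙 A) (g ≫ h) = M.ihomMap (𝟙 A) g ≫ M.ihomMap (𝟙 A) h := by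
    intro A X Y Z g h
    rw [← M.ihomMap_comp (𝟙 A) (𝟙 A) g h, Category.comp_id]
  have hX : M.L M.unit M.unit (M.ihom B Cc) ≫
      M.ihomMap (𝟙 (M.ihom M.unit M.unit))
        (s' M.unit B Cc ≫ M.ihomMap (𝟙 B) (M.i Cc)) =
      M.ihomMap (M.i M.unit) (𝟙 (M.ihom B Cc)) := by
    haveI := hiso (M.ihom M.unit M.unit) B Cc
    rw [← cancel_mono (s' (M.ihom M.unit M.unit) B Cc)]
    calc (M.L M.unit M.unit (M.ihom B Cc) ≫
            M.ihomMap (𝟙 (M.ihom M.unit M.unit))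
              (s' M.unit B Cc ≫ M.ihomMap (𝟙 B) (M.i Cc))) ≫
          s' (M.ihom M.unit M.unit) B Cc
        = M.L M.unit M.unit (M.ihom B Cc) ≫
            M.ihomMap (𝟙 (M.ihom M.unit M.unit)) (s' M.unit B Cc) ≫
            (M.ihomMap (𝟙 (M.ihom M.unit M.unit))
              (M.ihomMap (𝟙 B) (M.i Cc)) ≫
              s' (M.ihom M.unit M.unit) B Cc) := by
          rw [hcomp_r]; simp only [Category.assoc]
      _ = M.L M.unit M.unit (M.ihom B Cc) ≫
            M.ihomMap (𝟙 (M.ihom M.unit M.unit)) (s' M.unit B Cc) ≫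
            s' (M.ihom M.unit M.unit) B (M.ihom M.unit Cc) ≫
            M.ihomMap (𝟙 B) (M.ihomMap (𝟙 (M.ihom M.unit M.unit)) (M.i Cc)) := by
          rw [hnat (𝟙 (M.ihom M.unit M.unit)) (𝟙 B) (M.i Cc)]
      _ = (M.L M.unit M.unit (M.ihom B Cc) ≫
            M.ihomMap (𝟙 (M.ihom M.unit M.unit)) (s' M.unit B Cc) ≫
            s' (M.ihom M.unit M.unit) B (M.ihom M.unit Cc)) ≫
            M.ihomMap (𝟙 B) (M.ihomMap (𝟙 (M.ihom M.unit M.unit)) (M.i Cc)) := by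
          simp only [Category.assoc]
      _ = (s' M.unit B Cc ≫ M.ihomMap (𝟙 B) (M.L M.unit M.unit Cc)) ≫
            M.ihomMap (𝟙 B) (M.ihomMap (𝟙 (M.ihom M.unit M.unit)) (M.i Cc)) := by
          rw [h3 M.unit B Cc M.unit]
      _ = s' M.unit B Cc ≫ M.ihomMap (𝟙 B)
            (M.L M.unit M.unit Cc ≫
              M.ihomMap (𝟙 (M.ihom M.unit M.unit)) (M.i Cc)) := by
          rw [hcomp_r]; simp only [Category.assoc]
      _ = s' M.unit B Cc ≫ M.ihomMap (𝟙 B)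
            (M.ihomMap (M.i M.unit) (𝟙 Cc)) := by
          rw [M.ax4 M.unit Cc]
      _ = M.ihomMap (M.i M.unit) (M.ihomMap (𝟙 B) (𝟙 Cc)) ≫
            s' (M.ihom M.unit M.unit) B Cc := by
          rw [hnat (M.i M.unit) (𝟙 B) (𝟙 Cc)]
      _ = M.ihomMap (M.i M.unit) (𝟙 (M.ihom B Cc)) ≫
            s' (M.ihom M.unit M.unit) B Cc := by
          rw [M.ihomMap_id]
  -- Step 2: ψ = i [B,Cc]
  have key : s' M.unit B Cc ≫ M.ihomMap (𝟙 B) (M.i Cc) = M.i (M.ihom B Cc) := by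
    calc s' M.unit B Cc ≫ M.ihomMap (𝟙 B) (M.i Cc)
        = (M.L M.unit M.unit (M.ihom B Cc) ≫
            M.ihomMap (M.j M.unit) (𝟙 (M.ihom M.unit (M.ihom B Cc))) ≫
            M.i (M.ihom M.unit (M.ihom B Cc))) ≫
            (s' M.unit B Cc ≫ M.ihomMap (𝟙 B) (M.i Cc)) := by
          rw [M.ax1 M.unit (M.ihom B Cc), Category.id_comp]
      _ = M.L M.unit M.unit (M.ihom B Cc) ≫
            M.ihomMap (M.j M.unit) (𝟙 (M.ihom M.unit (M.ihom B Cc))) ≫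
            M.ihomMap (𝟙 M.unit) (s' M.unit B Cc ≫ M.ihomMap (𝟙 B) (M.i Cc)) ≫
            M.i (M.ihom B Cc) := by
          rw [M.i_natural (s' M.unit B Cc ≫ M.ihomMap (𝟙 B) (M.i Cc))]
          simp only [Category.assoc]
      _ = M.L M.unit M.unit (M.ihom B Cc) ≫
            M.ihomMap (𝟙 (M.ihom M.unit M.unit))
              (s' M.unit B Cc ≫ M.ihomMap (𝟙 B) (M.i Cc)) ≫
            M.ihomMap (M.j M.unit) (𝟙 (M.ihom B Cc)) ≫
            M.i (M.ihom B Cc) := by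
          rw [← Category.assoc (M.ihomMap (M.j M.unit) _),
            ← M.ihomMap_comp (M.j M.unit) (𝟙 M.unit) _ _,
            ← Category.assoc (M.ihomMap (𝟙 (M.ihom M.unit M.unit)) _),
            ← M.ihomMap_comp (𝟙 (M.ihom M.unit M.unit)) (M.j M.unit) _ (𝟙 _)]
          simp only [Category.id_comp, Category.comp_id, Category.assoc]
      _ = (M.L M.unit M.unit (M.ihom B Cc) ≫
            M.ihomMap (𝟙 (M.ihom M.unit M.unit))
              (s' M.unit B Cc ≫ M.ihomMap (𝟙 B) (M.i Cc))) ≫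
            M.ihomMap (M.j M.unit) (𝟙 (M.ihom B Cc)) ≫
            M.i (M.ihom B Cc) := by
          simp only [Category.assoc]
      _ = M.ihomMap (M.i M.unit) (𝟙 (M.ihom B Cc)) ≫
            M.ihomMap (M.j M.unit) (𝟙 (M.ihom B Cc)) ≫
            M.i (M.ihom B Cc) := by
          rw [hX]
      _ = M.ihomMap (M.j M.unit ≫ M.i M.unit)
            (𝟙 (M.ihom B Cc) ≫ 𝟙 (M.ihom B Cc)) ≫ M.i (M.ihom B Cc) := by
          rw [M.ihomMap_comp (M.i M.unit) (M.j M.unit) (𝟙 _) (𝟙 _), Category.assoc]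
      _ = M.i (M.ihom B Cc) := by
          rw [M.ax5, Category.comp_id, M.ihomMap_id, Category.id_comp]
  calc M.L B B Cc ≫ M.ihomMap (M.j B) (𝟙 (M.ihom B Cc)) ≫
        s' M.unit B Cc ≫ M.ihomMap (𝟙 B) (M.i Cc)
      = M.L B B Cc ≫ M.ihomMap (M.j B) (𝟙 (M.ihom B Cc)) ≫ M.i (M.ihom B Cc) := by
        rw [key]
    _ = 𝟙 (M.ihom B Cc) := M.ax1 B Cc
end

section
/- Let C be a closed skew monoidal category, meaning each functor −⊗A has a right adjoint [A,−]. Then natural isomorphisms s : (XA)B → (XB)A are in bijection with natural isomorphisms s' : [A,[B,Y]] → [B,[A,Y]], via the requirement that the adjunction isomorphisms C((XA)B, Y) ≅ C(X,[A,[B,Y]]) intertwine C(s,1) with C(1,s'); moreover s satisfies the Yang–Baxter axiom (S2) if and only if s' satisfies the corresponding hexagon (S2') for iterated homs, and s is a symmetry (s∘s = id) if and only if s'∘s' = id. -/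
open CategoryTheory

universe v u

namespace SkewMonoidalStruct

variable {C : Type u} [Category.{v} C] (M : SkewMonoidalStruct C)

/-- Closed structure on a skew monoidal category: each `− ⊗ A` has a right
adjoint `[A,−]`, naturally in `A`. -/
structure Closed where
  ihom : C → C → C
  ihomMap : ∀ {A' A B B' : C}, (A' ⟶ A) → (B ⟶ B') → (ihom A B ⟶ ihom A' B')
  ihomMap_id : ∀ A B : C, ihomMap (𝟙 A) (𝟙 B) = 𝟙 (ihom A B)
  ihomMap_comp : ∀ {A'' A' A B B' B'' : C}
      (f : A' ⟶ A) (f' : A'' ⟶ A') (g : B ⟶ B') (g' : B' ⟶ B''),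
      ihomMap (f' ≫ f) (g ≫ g') = ihomMap f g ≫ ihomMap f' g'
  adj : ∀ (X A B : C), (M.tensor X A ⟶ B) ≃ (X ⟶ ihom A B)
  adj_natural_left : ∀ {X' X A B : C} (f : X' ⟶ X) (g : M.tensor X A ⟶ B),
      adj X' A B (M.tensorHom f (𝟙 A) ≫ g) = f ≫ adj X A B g
  adj_natural_right : ∀ {X A B B' : C} (g : M.tensor X A ⟶ B) (h : B ⟶ B'),
      adj X A B' (g ≫ h) = adj X A B g ≫ ihomMap (𝟙 A) h
  adj_natural_mid : ∀ {X A' A B : C} (u : A' ⟶ A) (g : M.tensor X A ⟶ B),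
      adj X A' B (M.tensorHom (𝟙 X) u ≫ g) = adj X A B g ≫ ihomMap u (𝟙 B)

variable (Cl : M.Closed)

/-- Naturality (in all three variables) of a family
`s' : [A,[B,Y]] ⟶ [B,[A,Y]]` for the closed structure `Cl`. -/
def S'Nat (s' : ∀ A B Y : C, Cl.ihom A (Cl.ihom B Y) ⟶ Cl.ihom B (Cl.ihom A Y)) : Prop :=
  ∀ {A' A B' B Y Y' : C} (f : A' ⟶ A) (g : B' ⟶ B) (h : Y ⟶ Y'),
    Cl.ihomMap f (Cl.ihomMap g h) ≫ s' A' B' Y' =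
      s' A B Y ≫ Cl.ihomMap g (Cl.ihomMap f h)

/-- Axiom (S2') for `s'`: the two composites
`[C,[B,[A,Y]]] ⟶ [A,[B,[C,Y]]]` built from three applications of `s'`/`[1,s']` agree. -/
def S2' (s' : ∀ A B Y : C, Cl.ihom A (Cl.ihom B Y) ⟶ Cl.ihom B (Cl.ihom A Y)) : Prop :=
  ∀ A B Cc Y : C,
    s' Cc B (Cl.ihom A Y) ≫ Cl.ihomMap (𝟙 B) (s' Cc A Y) ≫ s' B A (Cl.ihom Cc Y) =
      Cl.ihomMap (𝟙 Cc) (s' B A Y) ≫ s' Cc A (Cl.ihom B Y) ≫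
        Cl.ihomMap (𝟙 A) (s' Cc B Y)

/-- The "double adjunction" isomorphism `C((XA)B, Y) ≅ C(X, [A,[B,Y]])`. -/
def Φ (X A B Y : C) : (M.tensor (M.tensor X A) B ⟶ Y) ≃ (X ⟶ Cl.ihom A (Cl.ihom B Y)) :=
  (Cl.adj (M.tensor X A) B Y).trans (Cl.adj X A (Cl.ihom B Y))

end SkewMonoidalStruct

namespace SkewMonoidalStruct

variable {C : Type u} [Category.{v} C] {M : SkewMonoidalStruct C} (Cl : M.Closed)

/-! ### Toolkit for the closed structure -/

lemma hm_collapse₁ {A' A B B' : C} (u : A' ⟶ A) (a : B ⟶ B') :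
    Cl.ihomMap (𝟙 A) a ≫ Cl.ihomMap u (𝟙 B') = Cl.ihomMap u a := by
  rw [← Cl.ihomMap_comp, Category.comp_id, Category.comp_id]

lemma hm_collapse₂ {A' A B B' : C} (u : A' ⟶ A) (a : B ⟶ B') :
    Cl.ihomMap u (𝟙 B) ≫ Cl.ihomMap (𝟙 A') a = Cl.ihomMap u a := by
  rw [← Cl.ihomMap_comp, Category.id_comp, Category.id_comp]

lemma hm_collapse₃ {A B B' B'' : C} (a : B ⟶ B') (b : B' ⟶ B'') :
    Cl.ihomMap (𝟙 A) a ≫ Cl.ihomMap (𝟙 A) b = Cl.ihomMap (𝟙 A) (a ≫ b) := by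
  rw [← Cl.ihomMap_comp, Category.id_comp]

lemma t_collapse₁ {X X' Y Y' : C} (f : X ⟶ X') (g : Y ⟶ Y') :
    M.tensorHom f (𝟙 Y) ≫ M.tensorHom (𝟙 X') g = M.tensorHom f g := by
  rw [← M.tensorHom_comp, Category.comp_id, Category.id_comp]

lemma t_collapse₂ {X X' Y Y' : C} (f : X ⟶ X') (g : Y ⟶ Y') :
    M.tensorHom (𝟙 X) g ≫ M.tensorHom f (𝟙 Y') = M.tensorHom f g := by
  rw [← M.tensorHom_comp, Category.comp_id, Category.id_comp]

lemma Phi_apply (X A B Y : C) (g : M.tensor (M.tensor X A) B ⟶ Y) :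
    M.Φ Cl X A B Y g = Cl.adj X A _ (Cl.adj (M.tensor X A) B Y g) := rfl

lemma Phi_left {X' X : C} (A B Y : C) (f : X' ⟶ X) (g : M.tensor (M.tensor X A) B ⟶ Y) :
    M.Φ Cl X' A B Y (M.tensorHom (M.tensorHom f (𝟙 A)) (𝟙 B) ≫ g) = f ≫ M.Φ Cl X A B Y g := by
  rw [Phi_apply, Phi_apply, Cl.adj_natural_left, Cl.adj_natural_left]

lemma Phi_right (X A B : C) {Y Y' : C} (g : M.tensor (M.tensor X A) B ⟶ Y) (h : Y ⟶ Y') :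
    M.Φ Cl X A B Y' (g ≫ h) =
      M.Φ Cl X A B Y g ≫ Cl.ihomMap (𝟙 A) (Cl.ihomMap (𝟙 B) h) := by
  rw [Phi_apply, Phi_apply, Cl.adj_natural_right, Cl.adj_natural_right]

lemma Phi_midA (X : C) {A' A : C} (B Y : C) (u : A' ⟶ A) (g : M.tensor (M.tensor X A) B ⟶ Y) :
    M.Φ Cl X A' B Y (M.tensorHom (M.tensorHom (𝟙 X) u) (𝟙 B) ≫ g) =
      M.Φ Cl X A B Y g ≫ Cl.ihomMap u (𝟙 (Cl.ihom B Y)) := by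
  rw [Phi_apply, Phi_apply, Cl.adj_natural_left, Cl.adj_natural_mid]

lemma Phi_midB (X A : C) {B' B : C} (Y : C) (v : B' ⟶ B) (g : M.tensor (M.tensor X A) B ⟶ Y) :
    M.Φ Cl X A B' Y (M.tensorHom (𝟙 (M.tensor X A)) v ≫ g) =
      M.Φ Cl X A B Y g ≫ Cl.ihomMap (𝟙 A) (Cl.ihomMap v (𝟙 Y)) := by
  rw [Phi_apply, Phi_apply, Cl.adj_natural_mid, Cl.adj_natural_right]

/-- The double counit `([A,[B,Y]] ⊗ A) ⊗ B ⟶ Y`. -/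
def eps (A B Y : C) : M.tensor (M.tensor (Cl.ihom A (Cl.ihom B Y)) A) B ⟶ Y :=
  (M.Φ Cl (Cl.ihom A (Cl.ihom B Y)) A B Y).symm (𝟙 _)

lemma Phi_eps (A B Y : C) :
    M.Φ Cl (Cl.ihom A (Cl.ihom B Y)) A B Y (eps Cl A B Y) = 𝟙 _ :=
  (M.Φ Cl _ A B Y).apply_symm_apply _

lemma Phi_symm_eq {X A B Y : C} (f : X ⟶ Cl.ihom A (Cl.ihom B Y)) :
    (M.Φ Cl X A B Y).symm f = M.tensorHom (M.tensorHom f (𝟙 A)) (𝟙 B) ≫ eps Cl A B Y := by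
  rw [Equiv.symm_apply_eq, Phi_left, Phi_eps, Category.comp_id]

/-- Naturality of the double counit. -/
lemma eps_natural {A' A B' B Y Y' : C} (u : A' ⟶ A) (v : B' ⟶ B) (w : Y ⟶ Y') :
    M.tensorHom (M.tensorHom (Cl.ihomMap u (Cl.ihomMap v w)) (𝟙 A')) (𝟙 B') ≫
        eps Cl A' B' Y' =
      M.tensorHom (M.tensorHom (𝟙 (Cl.ihom A (Cl.ihom B Y))) u) v ≫ eps Cl A B Y ≫ w := by
  apply (M.Φ Cl (Cl.ihom A (Cl.ihom B Y)) A' B' Y').injective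
  rw [Phi_left, Phi_eps, Category.comp_id]
  have hdec : M.tensorHom (M.tensorHom (𝟙 (Cl.ihom A (Cl.ihom B Y))) u) v =
      M.tensorHom (M.tensorHom (𝟙 _) u) (𝟙 B') ≫ M.tensorHom (𝟙 _) v := by
    rw [← M.tensorHom_comp, Category.comp_id, Category.id_comp]
  rw [hdec, Category.assoc, Phi_midA, Phi_midB, Phi_right, Phi_eps, Category.id_comp,
    hm_collapse₃, hm_collapse₁ Cl v w, hm_collapse₁]

/-- The intertwining property relating `s` and `s'` through `Φ`. -/
def Pprop (s : ∀ X A B : C, M.tensor (M.tensor X A) B ⟶ M.tensor (M.tensor X B) A)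
    (s' : ∀ A B Y : C, Cl.ihom A (Cl.ihom B Y) ⟶ Cl.ihom B (Cl.ihom A Y)) : Prop :=
  ∀ (X A B Y : C) (g : M.tensor (M.tensor X B) A ⟶ Y),
    M.Φ Cl X A B Y (s X A B ≫ g) = M.Φ Cl X B A Y g ≫ s' B A Y

/-- From `s` to `s'`. -/
def Fm (s : ∀ X A B : C, M.tensor (M.tensor X A) B ⟶ M.tensor (M.tensor X B) A)
    (A B Y : C) : Cl.ihom A (Cl.ihom B Y) ⟶ Cl.ihom B (Cl.ihom A Y) :=
  M.Φ Cl (Cl.ihom A (Cl.ihom B Y)) B A Y (s (Cl.ihom A (Cl.ihom B Y)) B A ≫ eps Cl A B Y)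

/-- From `s'` to `s`. -/
def Gm (s' : ∀ A B Y : C, Cl.ihom A (Cl.ihom B Y) ⟶ Cl.ihom B (Cl.ihom A Y))
    (X A B : C) : M.tensor (M.tensor X A) B ⟶ M.tensor (M.tensor X B) A :=
  (M.Φ Cl X A B (M.tensor (M.tensor X B) A)).symm
    (M.Φ Cl X B A (M.tensor (M.tensor X B) A) (𝟙 _) ≫ s' B A _)

lemma P_F {s : ∀ X A B : C, M.tensor (M.tensor X A) B ⟶ M.tensor (M.tensor X B) A}
    (hs : M.SNatural s) : Pprop Cl s (Fm Cl s) := by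
  intro X A B Y g
  have hg : g = M.tensorHom (M.tensorHom (M.Φ Cl X B A Y g) (𝟙 B)) (𝟙 A) ≫ eps Cl B A Y := by
    conv_lhs => rw [← (M.Φ Cl X B A Y).symm_apply_apply g, Phi_symm_eq]
  set f := M.Φ Cl X B A Y g with hf
  have hnat : M.tensorHom (M.tensorHom f (𝟙 A)) (𝟙 B) ≫ s (Cl.ihom B (Cl.ihom A Y)) A B =
      s X A B ≫ M.tensorHom (M.tensorHom f (𝟙 B)) (𝟙 A) := hs f (𝟙 A) (𝟙 B)
  calc M.Φ Cl X A B Y (s X A B ≫ g)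
      = M.Φ Cl X A B Y (M.tensorHom (M.tensorHom f (𝟙 A)) (𝟙 B) ≫
          (s (Cl.ihom B (Cl.ihom A Y)) A B ≫ eps Cl B A Y)) := by
        rw [← Category.assoc, hnat, Category.assoc, ← hg]
    _ = f ≫ Fm Cl s B A Y := by rw [Phi_left]; rfl

lemma P_s'_eq {s} {s'} (hP : Pprop Cl s s') : s' = Fm Cl s := by
  funext A B Y
  have := hP (Cl.ihom A (Cl.ihom B Y)) B A Y (eps Cl A B Y)
  rw [Phi_eps, Category.id_comp] at this
  exact this.symm

lemma P_s_unique {s₁ s₂} {s'} (h₁ : Pprop Cl s₁ s') (h₂ : Pprop Cl s₂ s') : s₁ = s₂ := by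
  funext X A B
  apply (M.Φ Cl X A B (M.tensor (M.tensor X B) A)).injective
  have e₁ := h₁ X A B (M.tensor (M.tensor X B) A) (𝟙 _)
  have e₂ := h₂ X A B (M.tensor (M.tensor X B) A) (𝟙 _)
  rw [Category.comp_id] at e₁ e₂
  rw [e₁, e₂]

lemma P_G {s' : ∀ A B Y : C, Cl.ihom A (Cl.ihom B Y) ⟶ Cl.ihom B (Cl.ihom A Y)}
    (hs' : M.S'Nat Cl s') : Pprop Cl (Gm Cl s') s' := by
  intro X A B Y g
  have h0 : M.Φ Cl X A B (M.tensor (M.tensor X B) A) (Gm Cl s' X A B) =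
      M.Φ Cl X B A (M.tensor (M.tensor X B) A) (𝟙 _) ≫ s' B A _ :=
    (M.Φ Cl X A B _).apply_symm_apply _
  have hnat := hs' (𝟙 B) (𝟙 A) g
  calc M.Φ Cl X A B Y (Gm Cl s' X A B ≫ g)
      = M.Φ Cl X A B _ (Gm Cl s' X A B) ≫ Cl.ihomMap (𝟙 A) (Cl.ihomMap (𝟙 B) g) := by
        rw [Phi_right]
    _ = M.Φ Cl X B A _ (𝟙 _) ≫ (s' B A _ ≫ Cl.ihomMap (𝟙 A) (Cl.ihomMap (𝟙 B) g)) := by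
        rw [h0, Category.assoc]
    _ = M.Φ Cl X B A _ (𝟙 _) ≫ Cl.ihomMap (𝟙 B) (Cl.ihomMap (𝟙 A) g) ≫ s' B A Y := by
        rw [← hnat]
    _ = M.Φ Cl X B A Y (𝟙 _ ≫ g) ≫ s' B A Y := by
        rw [Phi_right, Category.assoc]
    _ = M.Φ Cl X B A Y g ≫ s' B A Y := by rw [Category.id_comp]

lemma F_symm {s} {s'} (hP : Pprop Cl s s') (A B Y : C) :
    (M.Φ Cl (Cl.ihom A (Cl.ihom B Y)) B A Y).symm (s' A B Y) =
      s (Cl.ihom A (Cl.ihom B Y)) B A ≫ eps Cl A B Y := by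
  have := hP (Cl.ihom A (Cl.ihom B Y)) B A Y (eps Cl A B Y)
  rw [Phi_eps, Category.id_comp] at this
  rw [← this, Equiv.symm_apply_apply]

/-- Naturality of `s'` follows from naturality of `s`. -/
lemma N1 {s} {s'} (hP : Pprop Cl s s') (hs : M.SNatural s) : M.S'Nat Cl s' := by
  intro A' A B' B Y Y' f g h
  apply (M.Φ Cl (Cl.ihom A (Cl.ihom B Y)) B' A' Y').symm.injective
  set X₀ := Cl.ihom A (Cl.ihom B Y) with hX₀
  set X₁ := Cl.ihom A' (Cl.ihom B' Y') with hX₁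
  set φ := Cl.ihomMap f (Cl.ihomMap g h) with hφ
  have split : M.tensorHom (M.tensorHom (φ ≫ s' A' B' Y') (𝟙 B')) (𝟙 A') =
      M.tensorHom (M.tensorHom φ (𝟙 B')) (𝟙 A') ≫
        M.tensorHom (M.tensorHom (s' A' B' Y') (𝟙 B')) (𝟙 A') := by
    rw [← M.tensorHom_comp, ← M.tensorHom_comp, Category.comp_id, Category.comp_id]
  have lhs : (M.Φ Cl X₀ B' A' Y').symm (φ ≫ s' A' B' Y') =
      M.tensorHom (M.tensorHom (𝟙 X₀) g) f ≫ s X₀ B A ≫ eps Cl A B Y ≫ h := by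
    rw [Phi_symm_eq, split, Category.assoc, ← Phi_symm_eq, F_symm Cl hP,
      ← Category.assoc, hs φ (𝟙 B') (𝟙 A'), Category.assoc, eps_natural,
      ← Category.assoc, ← hs (𝟙 X₀) g f, Category.assoc]
  have split2 : M.tensorHom (M.tensorHom (s' A B Y ≫ Cl.ihomMap g (Cl.ihomMap f h)) (𝟙 B')) (𝟙 A') =
      M.tensorHom (M.tensorHom (s' A B Y) (𝟙 B')) (𝟙 A') ≫
        M.tensorHom (M.tensorHom (Cl.ihomMap g (Cl.ihomMap f h)) (𝟙 B')) (𝟙 A') := by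
    rw [← M.tensorHom_comp, ← M.tensorHom_comp, Category.comp_id, Category.comp_id]
  have inter : M.tensorHom (M.tensorHom (s' A B Y) (𝟙 B')) (𝟙 A') ≫
      M.tensorHom (M.tensorHom (𝟙 (Cl.ihom B (Cl.ihom A Y))) g) f =
      M.tensorHom (M.tensorHom (𝟙 X₀) g) f ≫
        M.tensorHom (M.tensorHom (s' A B Y) (𝟙 B)) (𝟙 A) := by
    rw [← M.tensorHom_comp, ← M.tensorHom_comp, ← M.tensorHom_comp, ← M.tensorHom_comp]
    simp only [Category.comp_id, Category.id_comp]
  have rhs : (M.Φ Cl X₀ B' A' Y').symm (s' A B Y ≫ Cl.ihomMap g (Cl.ihomMap f h)) =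
      M.tensorHom (M.tensorHom (𝟙 X₀) g) f ≫ s X₀ B A ≫ eps Cl A B Y ≫ h := by
    rw [Phi_symm_eq, split2, Category.assoc, eps_natural, ← Category.assoc, inter,
      Category.assoc, ← Category.assoc (M.tensorHom (M.tensorHom (s' A B Y) (𝟙 B)) (𝟙 A)),
      ← Phi_symm_eq, F_symm Cl hP, Category.assoc]
  rw [lhs, rhs]

/-- Naturality of `s` follows from naturality of `s'`. -/
lemma N2 {s} {s'} (hP : Pprop Cl s s') (hs' : M.S'Nat Cl s') : M.SNatural s := by
  intro X X' A A' B B' f g h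
  apply (M.Φ Cl X A B (M.tensor (M.tensor X' B') A')).injective
  set Y₁ := M.tensor (M.tensor X' B') A' with hY₁
  have dec1 : M.tensorHom (M.tensorHom f g) h =
      M.tensorHom (M.tensorHom f (𝟙 A)) (𝟙 B) ≫
        M.tensorHom (M.tensorHom (𝟙 X') g) (𝟙 B) ≫
          M.tensorHom (𝟙 (M.tensor X' A')) h := by
    rw [t_collapse₁ (M.tensorHom (𝟙 X') g) h, ← M.tensorHom_comp, t_collapse₁,
      Category.id_comp]
  have dec2 : M.tensorHom (M.tensorHom f h) g =
      M.tensorHom (M.tensorHom f (𝟙 B)) (𝟙 A) ≫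
        M.tensorHom (M.tensorHom (𝟙 X') h) (𝟙 A) ≫
          M.tensorHom (𝟙 (M.tensor X' B')) g := by
    rw [t_collapse₁ (M.tensorHom (𝟙 X') h) g, ← M.tensorHom_comp, t_collapse₁,
      Category.id_comp]
  have hP1 : M.Φ Cl X' A' B' Y₁ (s X' A' B') =
      M.Φ Cl X' B' A' Y₁ (𝟙 _) ≫ s' B' A' Y₁ := by
    have := hP X' A' B' Y₁ (𝟙 _); rwa [Category.comp_id] at this
  have hnat := hs' h g (𝟙 Y₁)
  -- LHS
  have lhs : M.Φ Cl X A B Y₁ (M.tensorHom (M.tensorHom f g) h ≫ s X' A' B') =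
      f ≫ M.Φ Cl X' B' A' Y₁ (𝟙 _) ≫ s' B' A' Y₁ ≫
        Cl.ihomMap (𝟙 A') (Cl.ihomMap h (𝟙 Y₁)) ≫ Cl.ihomMap g (𝟙 _) := by
    rw [dec1, Category.assoc, Category.assoc, Phi_left, Phi_midA, Phi_midB, hP1]
    simp only [Category.assoc]
  have rhs : M.Φ Cl X A B Y₁ (s X A B ≫ M.tensorHom (M.tensorHom f h) g) =
      f ≫ M.Φ Cl X' B' A' Y₁ (𝟙 _) ≫ Cl.ihomMap (𝟙 B') (Cl.ihomMap g (𝟙 Y₁)) ≫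
        Cl.ihomMap h (𝟙 _) ≫ s' B A Y₁ := by
    rw [hP X A B Y₁ (M.tensorHom (M.tensorHom f h) g), dec2]
    have : M.tensorHom (M.tensorHom f (𝟙 B)) (𝟙 A) ≫
        M.tensorHom (M.tensorHom (𝟙 X') h) (𝟙 A) ≫
          M.tensorHom (𝟙 (M.tensor X' B')) g =
        M.tensorHom (M.tensorHom f (𝟙 B)) (𝟙 A) ≫
        M.tensorHom (M.tensorHom (𝟙 X') h) (𝟙 A) ≫
          (M.tensorHom (𝟙 (M.tensor X' B')) g ≫ 𝟙 _) := by
      rw [Category.comp_id]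
    rw [this, Phi_left, Phi_midA, Phi_midB]
    simp only [Category.assoc]
  rw [lhs, rhs]
  congr 2
  have e1 : Cl.ihomMap h (Cl.ihomMap g (𝟙 Y₁)) =
      Cl.ihomMap (𝟙 B') (Cl.ihomMap g (𝟙 Y₁)) ≫ Cl.ihomMap h (𝟙 _) := by
    rw [hm_collapse₁]
  have e2 : Cl.ihomMap g (Cl.ihomMap h (𝟙 Y₁)) =
      Cl.ihomMap (𝟙 A') (Cl.ihomMap h (𝟙 Y₁)) ≫ Cl.ihomMap g (𝟙 _) := by
    rw [hm_collapse₁]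
  rw [← e2, ← hnat, e1, Category.assoc]

/-- Transfer of two-sided pointwise identities through `Pprop`. -/
lemma comp_transfer {s t s' t'} (hP : Pprop Cl s s') (hQ : Pprop Cl t t')
    (h : ∀ X A B : C, s X A B ≫ t X B A = 𝟙 _) :
    ∀ A B Y : C, t' A B Y ≫ s' B A Y = 𝟙 _ := by
  intro A B Y
  set X := Cl.ihom A (Cl.ihom B Y) with hX
  have e1 := hP X A B Y (t X B A ≫ eps Cl A B Y)
  have e2 := hQ X B A Y (eps Cl A B Y)
  rw [Phi_eps, Category.id_comp] at e2
  rw [e2, ← Category.assoc (s X A B), h, Category.id_comp, Phi_eps] at e1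
  exact e1.symm

lemma comp_transfer' {s t s' t'} (hP : Pprop Cl s s') (hQ : Pprop Cl t t')
    (h : ∀ A B Y : C, t' A B Y ≫ s' B A Y = 𝟙 _) :
    ∀ X A B : C, s X A B ≫ t X B A = 𝟙 _ := by
  intro X A B
  apply (M.Φ Cl X A B (M.tensor (M.tensor X A) B)).injective
  have e1 := hP X A B (M.tensor (M.tensor X A) B) (t X B A)
  have e2 := hQ X B A (M.tensor (M.tensor X A) B) (𝟙 _)
  rw [Category.comp_id] at e2
  rw [e2, Category.assoc, h, Category.comp_id] at e1
  exact e1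

/-! ### The triple adjunction and axiom (S2) -/

/-- The triple adjunction `C(((XA)B)C, Y) ≃ C(X, [A,[B,[C,Y]]])`. -/
def Psi (X A B Cc Y : C) :
    (M.tensor (M.tensor (M.tensor X A) B) Cc ⟶ Y) ≃
      (X ⟶ Cl.ihom A (Cl.ihom B (Cl.ihom Cc Y))) :=
  (Cl.adj (M.tensor (M.tensor X A) B) Cc Y).trans (M.Φ Cl X A B (Cl.ihom Cc Y))

lemma Psi_apply (X A B Cc Y : C) (g : M.tensor (M.tensor (M.tensor X A) B) Cc ⟶ Y) :
    Psi Cl X A B Cc Y g =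
      M.Φ Cl X A B (Cl.ihom Cc Y) (Cl.adj (M.tensor (M.tensor X A) B) Cc Y g) := rfl

lemma Psi_apply' (X A B Cc Y : C) (g : M.tensor (M.tensor (M.tensor X A) B) Cc ⟶ Y) :
    Psi Cl X A B Cc Y g =
      Cl.adj X A _ (M.Φ Cl (M.tensor X A) B Cc Y g) := rfl

/-- Peeling an `s` acting on the two outer factors. -/
lemma T1 {s s'} (hP : Pprop Cl s s') (X A B Cc Y : C)
    (g : M.tensor (M.tensor (M.tensor X A) Cc) B ⟶ Y) :
    Psi Cl X A B Cc Y (s (M.tensor X A) B Cc ≫ g) =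
      Psi Cl X A Cc B Y g ≫ Cl.ihomMap (𝟙 A) (s' Cc B Y) := by
  rw [Psi_apply', Psi_apply', hP (M.tensor X A) B Cc Y g, Cl.adj_natural_right]

/-- Peeling an `s ⊗ 1` acting on the three inner factors. -/
lemma T2 {s s'} (hP : Pprop Cl s s') (X A B Cc Y : C)
    (g : M.tensor (M.tensor (M.tensor X B) A) Cc ⟶ Y) :
    Psi Cl X A B Cc Y (M.tensorHom (s X A B) (𝟙 Cc) ≫ g) =
      Psi Cl X B A Cc Y g ≫ s' B A (Cl.ihom Cc Y) := by
  rw [Psi_apply, Psi_apply, Cl.adj_natural_left, hP X A B (Cl.ihom Cc Y)]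

/-- The triple counit. -/
def epsT (A B Cc Y : C) :
    M.tensor (M.tensor (M.tensor (Cl.ihom A (Cl.ihom B (Cl.ihom Cc Y))) A) B) Cc ⟶ Y :=
  (Psi Cl (Cl.ihom A (Cl.ihom B (Cl.ihom Cc Y))) A B Cc Y).symm (𝟙 _)

lemma Psi_epsT (A B Cc Y : C) :
    Psi Cl (Cl.ihom A (Cl.ihom B (Cl.ihom Cc Y))) A B Cc Y (epsT Cl A B Cc Y) = 𝟙 _ :=
  (Psi Cl _ A B Cc Y).apply_symm_apply _

lemma transportLHS {s s'} (hP : Pprop Cl s s') (X A B Cc Y : C)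
    (g : M.tensor (M.tensor (M.tensor X Cc) B) A ⟶ Y) :
    Psi Cl X A B Cc Y ((s (M.tensor X A) B Cc ≫ M.tensorHom (s X A Cc) (𝟙 B) ≫
        s (M.tensor X Cc) A B) ≫ g) =
      Psi Cl X Cc B A Y g ≫ Cl.ihomMap (𝟙 Cc) (s' B A Y) ≫
        s' Cc A (Cl.ihom B Y) ≫ Cl.ihomMap (𝟙 A) (s' Cc B Y) := by
  simp only [Category.assoc]
  rw [T1 Cl hP, T2 Cl hP, T1 Cl hP]
  simp only [Category.assoc]

lemma transportRHS {s s'} (hP : Pprop Cl s s') (X A B Cc Y : C)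
    (g : M.tensor (M.tensor (M.tensor X Cc) B) A ⟶ Y) :
    Psi Cl X A B Cc Y ((M.tensorHom (s X A B) (𝟙 Cc) ≫ s (M.tensor X B) A Cc ≫
        M.tensorHom (s X B Cc) (𝟙 A)) ≫ g) =
      Psi Cl X Cc B A Y g ≫ s' Cc B (Cl.ihom A Y) ≫
        Cl.ihomMap (𝟙 B) (s' Cc A Y) ≫ s' B A (Cl.ihom Cc Y) := by
  simp only [Category.assoc]
  rw [T2 Cl hP, T1 Cl hP, T2 Cl hP]
  simp only [Category.assoc]

lemma S2_iff_S2' {s s'} (hP : Pprop Cl s s') : M.S2 s ↔ M.S2' Cl s' := by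
  constructor
  · intro h A B Cc Y
    set X := Cl.ihom Cc (Cl.ihom B (Cl.ihom A Y)) with hX
    have e1 := transportLHS Cl hP X A B Cc Y (epsT Cl Cc B A Y)
    have e2 := transportRHS Cl hP X A B Cc Y (epsT Cl Cc B A Y)
    rw [h X A B Cc] at e1
    rw [e1, Psi_epsT, Category.id_comp, Category.id_comp] at e2
    exact e2.symm
  · intro h X A B Cc
    apply (Psi Cl X A B Cc (M.tensor (M.tensor (M.tensor X Cc) B) A)).injective
    have e1 := transportLHS Cl hP X A B Cc _ (𝟙 (M.tensor (M.tensor (M.tensor X Cc) B) A))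
    have e2 := transportRHS Cl hP X A B Cc _ (𝟙 (M.tensor (M.tensor (M.tensor X Cc) B) A))
    rw [Category.comp_id] at e1 e2
    rw [e1, e2, h A B Cc]

/-! ### Transfer of invertibility -/

lemma iso_fwd {s s'} (hP : Pprop Cl s s') (hs : M.SNatural s)
    (hiso : ∀ X A B : C, IsIso (s X A B)) : ∀ A B Y : C, IsIso (s' A B Y) := by
  choose u hu₁ hu₂ using fun X A B => (hiso X A B).out
  set t : ∀ X A B : C, M.tensor (M.tensor X A) B ⟶ M.tensor (M.tensor X B) A :=
    fun X A B => u X B A with ht_def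
  have ht : M.SNatural t := by
    intro X X' A A' B B' f g h
    calc M.tensorHom (M.tensorHom f g) h ≫ t X' A' B'
        = (u X B A ≫ s X B A) ≫ M.tensorHom (M.tensorHom f g) h ≫ u X' B' A' := by
          rw [hu₂, Category.id_comp]
      _ = u X B A ≫ (s X B A ≫ M.tensorHom (M.tensorHom f g) h) ≫ u X' B' A' := by
          simp only [Category.assoc]
      _ = u X B A ≫ (M.tensorHom (M.tensorHom f h) g ≫ s X' B' A') ≫ u X' B' A' := by
          rw [← hs f h g]
      _ = u X B A ≫ M.tensorHom (M.tensorHom f h) g ≫ (s X' B' A' ≫ u X' B' A') := by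
          simp only [Category.assoc]
      _ = t X A B ≫ M.tensorHom (M.tensorHom f h) g := by
          rw [hu₁, Category.comp_id]
  have hPt : Pprop Cl t (Fm Cl t) := P_F Cl ht
  have c1 : ∀ A B Y : C, Fm Cl t A B Y ≫ s' B A Y = 𝟙 _ :=
    comp_transfer Cl hP hPt (fun X A B => hu₁ X A B)
  have c2 : ∀ A B Y : C, s' A B Y ≫ Fm Cl t B A Y = 𝟙 _ :=
    comp_transfer Cl hPt hP (fun X A B => hu₂ X B A)
  exact fun A B Y => ⟨Fm Cl t B A Y, c2 A B Y, c1 B A Y⟩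

lemma iso_bwd {s s'} (hP : Pprop Cl s s') (hs' : M.S'Nat Cl s')
    (hiso : ∀ A B Y : C, IsIso (s' A B Y)) : ∀ X A B : C, IsIso (s X A B) := by
  choose u hu₁ hu₂ using fun A B Y => (hiso A B Y).out
  set t' : ∀ A B Y : C, Cl.ihom A (Cl.ihom B Y) ⟶ Cl.ihom B (Cl.ihom A Y) :=
    fun A B Y => u B A Y with ht'_def
  have ht' : M.S'Nat Cl t' := by
    intro A' A B' B Y Y' f g h
    calc Cl.ihomMap f (Cl.ihomMap g h) ≫ t' A' B' Y'
        = (u B A Y ≫ s' B A Y) ≫ Cl.ihomMap f (Cl.ihomMap g h) ≫ u B' A' Y' := by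
          rw [hu₂, Category.id_comp]
      _ = u B A Y ≫ (s' B A Y ≫ Cl.ihomMap f (Cl.ihomMap g h)) ≫ u B' A' Y' := by
          simp only [Category.assoc]
      _ = u B A Y ≫ (Cl.ihomMap g (Cl.ihomMap f h) ≫ s' B' A' Y') ≫ u B' A' Y' := by
          rw [← hs' g f h]
      _ = u B A Y ≫ Cl.ihomMap g (Cl.ihomMap f h) ≫ (s' B' A' Y' ≫ u B' A' Y') := by
          simp only [Category.assoc]
      _ = t' A B Y ≫ Cl.ihomMap g (Cl.ihomMap f h) := by
          rw [hu₁, Category.comp_id]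
  have hPt : Pprop Cl (Gm Cl t') t' := P_G Cl ht'
  have c1 : ∀ X A B : C, s X A B ≫ Gm Cl t' X B A = 𝟙 _ :=
    comp_transfer' Cl hP hPt (fun A B Y => hu₂ B A Y)
  have c2 : ∀ X A B : C, Gm Cl t' X A B ≫ s X B A = 𝟙 _ :=
    comp_transfer' Cl hPt hP (fun A B Y => hu₁ A B Y)
  exact fun X A B => ⟨Gm Cl t' X B A, c1 X A B, c2 X B A⟩

end SkewMonoidalStruct
open SkewMonoidalStruct in
/-- Theorem 3.1, parts concerning the correspondence, (S2)/(S2')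
and symmetry: for a closed skew monoidal category, natural isomorphisms
`s : (XA)B ⟶ (XB)A` are in bijection with natural isomorphisms
`s' : [A,[B,Y]] ⟶ [B,[A,Y]]`, via the requirement that the adjunction
isomorphisms intertwine `C(s,1)` with `C(1,s')`; moreover `s` satisfies (S2)
iff `s'` satisfies (S2'), and `s ∘ s = id` iff `s' ∘ s' = id`. -/
theorem stmt10 {C : Type u} [Category.{v} C] (M : SkewMonoidalStruct C) (Cl : M.Closed) :
    ∃ E : {s : ∀ X A B : C, M.tensor (M.tensor X A) B ⟶ M.tensor (M.tensor X B) A //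
            M.SNatural s ∧ ∀ X A B, IsIso (s X A B)} ≃
          {s' : ∀ A B Y : C, Cl.ihom A (Cl.ihom B Y) ⟶ Cl.ihom B (Cl.ihom A Y) //
            M.S'Nat Cl s' ∧ ∀ A B Y, IsIso (s' A B Y)},
      (∀ (s : {s : ∀ X A B : C, M.tensor (M.tensor X A) B ⟶ M.tensor (M.tensor X B) A //
            M.SNatural s ∧ ∀ X A B, IsIso (s X A B)})
         (X A B Y : C) (g : M.tensor (M.tensor X B) A ⟶ Y),
          M.Φ Cl X A B Y (s.1 X A B ≫ g) =
            M.Φ Cl X B A Y g ≫ (E s).1 B A Y) ∧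
      (∀ s, (M.S2 s.1 ↔ M.S2' Cl (E s).1)) ∧
      (∀ s, ((∀ X A B : C, s.1 X A B ≫ s.1 X B A = 𝟙 _) ↔
             (∀ A B Y : C, (E s).1 A B Y ≫ (E s).1 B A Y = 𝟙 _))) := by
  classical
  refine ⟨{
      toFun := fun s => ⟨Fm Cl s.1, N1 Cl (P_F Cl s.2.1) s.2.1,
        iso_fwd Cl (P_F Cl s.2.1) s.2.1 s.2.2⟩
      invFun := fun s' => ⟨Gm Cl s'.1, N2 Cl (P_G Cl s'.2.1) s'.2.1,
        iso_bwd Cl (P_G Cl s'.2.1) s'.2.1 s'.2.2⟩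
      left_inv := fun s => Subtype.ext
        (P_s_unique Cl (P_G Cl (N1 Cl (P_F Cl s.2.1) s.2.1)) (P_F Cl s.2.1))
      right_inv := fun s' => Subtype.ext
        (P_s'_eq Cl (P_G Cl s'.2.1)).symm }, ?_, ?_, ?_⟩
  · exact fun s X A B Y g => P_F Cl s.2.1 X A B Y g
  · exact fun s => S2_iff_S2' Cl (P_F Cl s.2.1)
  · intro s
    constructor
    · exact fun h => comp_transfer Cl (P_F Cl s.2.1) (P_F Cl s.2.1) h
    · exact fun h => comp_transfer' Cl (P_F Cl s.2.1) (P_F Cl s.2.1) h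
end

section
/- Let C be a monoidal category equipped with a skew cowarping (Q, K, v, v₀, k) and let y : QX⊗QY → QY⊗QX be a natural isomorphism satisfying: (i) the Yang–Baxter equation (y⊗1)(1⊗y)(y⊗1) = (1⊗y)(y⊗1)(1⊗y); (ii) (v⊗1) ∘ (1⊗y) ∘ (y⊗1) = y ∘ (1⊗v) : QX⊗QY⊗QZ → Q(Y⊗QZ)⊗QX; (iii) (1⊗v) ∘ (y⊗1) ∘ (1⊗y) = y ∘ (v⊗1) : QX⊗QY⊗QZ → QZ⊗Q(X⊗QY); (iv) Q(1⊗y) ∘ v ∘ (v⊗1) = v ∘ (v⊗1) ∘ (1⊗y) : QX⊗QY⊗QZ → Q(X⊗QZ⊗QY). Then the maps s : (X*Y)*Z = X⊗QY⊗QZ →^{1⊗y} X⊗QZ⊗QY = (X*Z)*Y define a braiding on the cowarped skew monoidal category C[Q]. -/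
open CategoryTheory MonoidalCategory

universe v u

variable {C : Type u} [Category.{v} C] [MonoidalCategory C]

namespace SkewCowarping

variable (Q : C ⥤ C) (K : C)
  (v : ∀ X Y : C, Q.obj X ⊗ Q.obj Y ⟶ Q.obj (X ⊗ Q.obj Y))
  (v₀ : 𝟙_ C ⟶ Q.obj K) (k : ∀ X : C, K ⊗ Q.obj X ⟶ X)

/-- The tensor product of the cowarped skew monoidal category `C[Q]`:
`X * Y = X ⊗ QY`. -/
def star (X Y : C) : C := X ⊗ Q.obj Y

/-- The action of `C[Q]` on morphisms: `f * g = f ⊗ Qg`. -/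
def starHom {X X' Y Y' : C} (f : X ⟶ X') (g : Y ⟶ Y') :
    star Q X Y ⟶ star Q X' Y' := f ⊗ₘ Q.map g

/-- The associator of `C[Q]`. -/
def sAssoc (X Y Z : C) : star Q (star Q X Y) Z ⟶ star Q X (star Q Y Z) :=
  (α_ X (Q.obj Y) (Q.obj Z)).hom ≫ (X ◁ v Y Z)

/-- The left unit of `C[Q]`. -/
def sL (X : C) : star Q K X ⟶ X := k X

/-- The right unit of `C[Q]`. -/
def sR (X : C) : X ⟶ star Q X K := (ρ_ X).inv ≫ (X ◁ v₀)

/-- Naturality of `v`. -/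
def VNatural : Prop :=
  ∀ {X X' Y Y' : C} (f : X ⟶ X') (g : Y ⟶ Y'),
    (Q.map f ⊗ₘ Q.map g) ≫ v X' Y' = v X Y ≫ Q.map (f ⊗ₘ Q.map g)

/-- Naturality of `k`. -/
def KNatural : Prop :=
  ∀ {X X' : C} (f : X ⟶ X'), (K ◁ Q.map f) ≫ k X' = k X ≫ f

/-- The five axioms of a skew cowarping, i.e. the five skew monoidal
coherence axioms for the cowarped structure `C[Q]`. -/
def CowarpAxioms : Prop :=
  (∀ A B Cc D : C,
    starHom Q (sAssoc Q v A B Cc) (𝟙 D) ≫ sAssoc Q v A (star Q B Cc) D ≫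
        starHom Q (𝟙 A) (sAssoc Q v B Cc D) =
      sAssoc Q v (star Q A B) Cc D ≫ sAssoc Q v A B (star Q Cc D)) ∧
  (∀ A B : C,
    sAssoc Q v K A B ≫ sL Q K k (star Q A B) = starHom Q (sL Q K k A) (𝟙 B)) ∧
  (∀ A B : C,
    starHom Q (sR Q K v₀ A) (𝟙 B) ≫ sAssoc Q v A K B ≫
        starHom Q (𝟙 A) (sL Q K k B) = 𝟙 (star Q A B)) ∧
  (∀ A B : C,
    sR Q K v₀ (star Q A B) ≫ sAssoc Q v A B K = starHom Q (𝟙 A) (sR Q K v₀ B)) ∧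
  (sR Q K v₀ K ≫ sL Q K k K = 𝟙 K)

variable (y : ∀ X Y : C, Q.obj X ⊗ Q.obj Y ≅ Q.obj Y ⊗ Q.obj X)

/-- Naturality of a family `y : QX ⊗ QY ≅ QY ⊗ QX`. -/
def YNatural : Prop :=
  ∀ {X X' Y Y' : C} (f : X ⟶ X') (g : Y ⟶ Y'),
    (Q.map f ⊗ₘ Q.map g) ≫ (y X' Y').hom = (y X Y).hom ≫ (Q.map g ⊗ₘ Q.map f)

/-- Equation (1): the Yang–Baxter equation for `y`. -/
def Y1 : Prop :=
  ∀ X Y Z : C,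
    ((y X Y).hom ▷ Q.obj Z) ≫ (α_ _ _ _).hom ≫ (Q.obj Y ◁ (y X Z).hom) ≫
        (α_ _ _ _).inv ≫ ((y Y Z).hom ▷ Q.obj X) =
      (α_ _ _ _).hom ≫ (Q.obj X ◁ (y Y Z).hom) ≫ (α_ _ _ _).inv ≫
        ((y X Z).hom ▷ Q.obj Y) ≫ (α_ _ _ _).hom ≫ (Q.obj Z ◁ (y X Y).hom) ≫
          (α_ _ _ _).inv

/-- Equation (1a): `(v⊗1) ∘ (1⊗y) ∘ (y⊗1) = y ∘ (1⊗v)`. -/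
def Y1a : Prop :=
  ∀ X Y Z : C,
    ((y X Y).hom ▷ Q.obj Z) ≫ (α_ _ _ _).hom ≫ (Q.obj Y ◁ (y X Z).hom) ≫
        (α_ _ _ _).inv ≫ (v Y Z ▷ Q.obj X) =
      (α_ _ _ _).hom ≫ (Q.obj X ◁ v Y Z) ≫ (y X (Y ⊗ Q.obj Z)).hom

/-- Equation (1b): `(1⊗v) ∘ (y⊗1) ∘ (1⊗y) = y ∘ (v⊗1)`. -/
def Y1b : Prop :=
  ∀ X Y Z : C,
    (α_ _ _ _).hom ≫ (Q.obj X ◁ (y Y Z).hom) ≫ (α_ _ _ _).inv ≫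
        ((y X Z).hom ▷ Q.obj Y) ≫ (α_ _ _ _).hom ≫ (Q.obj Z ◁ v X Y) =
      (v X Y ▷ Q.obj Z) ≫ (y (X ⊗ Q.obj Y) Z).hom

/-- Equation (funny): `Q(1⊗y) ∘ v ∘ (v⊗1) = v ∘ (v⊗1) ∘ (1⊗y)`. -/
def Yfunny : Prop :=
  ∀ X Y Z : C,
    (v X Y ▷ Q.obj Z) ≫ v (X ⊗ Q.obj Y) Z ≫
        Q.map ((α_ X (Q.obj Y) (Q.obj Z)).hom ≫ (X ◁ (y Y Z).hom) ≫
          (α_ X (Q.obj Z) (Q.obj Y)).inv) =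
      (α_ _ _ _).hom ≫ (Q.obj X ◁ (y Y Z).hom) ≫ (α_ _ _ _).inv ≫
        (v X Z ▷ Q.obj Y) ≫ v (X ⊗ Q.obj Z) Y

/-- The induced candidate braiding on `C[Q]`. -/
def sB (X A B : C) : star Q (star Q X A) B ⟶ star Q (star Q X B) A :=
  (α_ X (Q.obj A) (Q.obj B)).hom ≫ (X ◁ (y A B).hom) ≫ (α_ X (Q.obj B) (Q.obj A)).inv

end SkewCowarping

open SkewCowarping in
/-- Proposition 4.1, "if" direction: if `y : QX⊗QY ≅ QY⊗QX`
is a natural isomorphism satisfying equations (1), (1a), (1b) and (funny), then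
the induced maps `1 ⊗ y : (X*Y)*Z ⟶ (X*Z)*Y` form a braiding on the cowarped
skew monoidal category `C[Q]`: they satisfy (S2), (S3a), (S3b) and (S*). -/
theorem stmt11 {C : Type u} [Category.{v} C] [MonoidalCategory C]
    (Q : C ⥤ C) (K : C)
    (v : ∀ X Y : C, Q.obj X ⊗ Q.obj Y ⟶ Q.obj (X ⊗ Q.obj Y))
    (v₀ : 𝟙_ C ⟶ Q.obj K) (k : ∀ X : C, K ⊗ Q.obj X ⟶ X)
    (hv : VNatural Q v) (hk : KNatural Q K k)
    (hax : CowarpAxioms Q K v v₀ k)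
    (y : ∀ X Y : C, Q.obj X ⊗ Q.obj Y ≅ Q.obj Y ⊗ Q.obj X)
    (hy : YNatural Q y)
    (h1 : Y1 Q y) (h1a : Y1a Q v y) (h1b : Y1b Q v y) (hf : Yfunny Q v y) :
    -- (S2)
    (∀ X A B Cc : C,
      sB Q y (star Q X A) B Cc ≫ starHom Q (sB Q y X A Cc) (𝟙 B) ≫
          sB Q y (star Q X Cc) A B =
        starHom Q (sB Q y X A B) (𝟙 Cc) ≫ sB Q y (star Q X B) A Cc ≫
          starHom Q (sB Q y X B Cc) (𝟙 A)) ∧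
    -- (S3a)
    (∀ X A B Cc : C,
      starHom Q (sB Q y X A B) (𝟙 Cc) ≫ sB Q y (star Q X B) A Cc ≫
          starHom Q (sAssoc Q v X B Cc) (𝟙 A) =
        sAssoc Q v (star Q X A) B Cc ≫ sB Q y X A (star Q B Cc)) ∧
    -- (S3b)
    (∀ X A B Cc : C,
      sB Q y (star Q X A) B Cc ≫ starHom Q (sB Q y X A Cc) (𝟙 B) ≫
          sAssoc Q v (star Q X Cc) A B =
        starHom Q (sAssoc Q v X A B) (𝟙 Cc) ≫ sB Q y X (star Q A B) Cc) ∧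
    -- (S*)
    (∀ X A B Cc : C,
      starHom Q (sAssoc Q v X A B) (𝟙 Cc) ≫ sAssoc Q v X (star Q A B) Cc ≫
          starHom Q (𝟙 X) (sB Q y A B Cc) =
        sB Q y (star Q X A) B Cc ≫ starHom Q (sAssoc Q v X A Cc) (𝟙 B) ≫
          sAssoc Q v X (star Q A Cc) B) := by
  refine ⟨fun X A B Cc => ?_, fun X A B Cc => ?_, fun X A B Cc => ?_, fun X A B Cc => ?_⟩ <;>
    simp only [sB, starHom, sAssoc, SkewCowarping.star, CategoryTheory.Functor.map_id, tensorHom_id,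
      id_tensorHom]
  · calc _ = ((α_ (X ⊗ Q.obj A) (Q.obj B) (Q.obj Cc)).hom ≫
          (α_ X (Q.obj A) (Q.obj B ⊗ Q.obj Cc)).hom ≫
          (X ◁ (α_ (Q.obj A) (Q.obj B) (Q.obj Cc)).inv)) ≫
        (X ◁ ((α_ _ _ _).hom ≫ (Q.obj A ◁ (y B Cc).hom) ≫ (α_ _ _ _).inv ≫
          ((y A Cc).hom ▷ Q.obj B) ≫ (α_ _ _ _).hom ≫ (Q.obj Cc ◁ (y A B).hom) ≫
            (α_ _ _ _).inv)) ≫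
        ((X ◁ (α_ (Q.obj Cc) (Q.obj B) (Q.obj A)).hom) ≫
          (α_ X (Q.obj Cc) (Q.obj B ⊗ Q.obj A)).inv ≫
          (α_ (X ⊗ Q.obj Cc) (Q.obj B) (Q.obj A)).inv) := by monoidal
      _ = ((α_ (X ⊗ Q.obj A) (Q.obj B) (Q.obj Cc)).hom ≫
          (α_ X (Q.obj A) (Q.obj B ⊗ Q.obj Cc)).hom ≫
          (X ◁ (α_ (Q.obj A) (Q.obj B) (Q.obj Cc)).inv)) ≫
        (X ◁ (((y A B).hom ▷ Q.obj Cc) ≫ (α_ _ _ _).hom ≫ (Q.obj B ◁ (y A Cc).hom) ≫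
          (α_ _ _ _).inv ≫ ((y B Cc).hom ▷ Q.obj A))) ≫
        ((X ◁ (α_ (Q.obj Cc) (Q.obj B) (Q.obj A)).hom) ≫
          (α_ X (Q.obj Cc) (Q.obj B ⊗ Q.obj A)).inv ≫
          (α_ (X ⊗ Q.obj Cc) (Q.obj B) (Q.obj A)).inv) := by rw [h1 A B Cc]
      _ = _ := by monoidal
  · calc _ = ((α_ (X ⊗ Q.obj A) (Q.obj B) (Q.obj Cc)).hom ≫
          (α_ X (Q.obj A) (Q.obj B ⊗ Q.obj Cc)).hom ≫
          (X ◁ (α_ (Q.obj A) (Q.obj B) (Q.obj Cc)).inv)) ≫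
        (X ◁ (((y A B).hom ▷ Q.obj Cc) ≫ (α_ _ _ _).hom ≫ (Q.obj B ◁ (y A Cc).hom) ≫
          (α_ _ _ _).inv ≫ (v B Cc ▷ Q.obj A))) ≫
        (α_ X (Q.obj (B ⊗ Q.obj Cc)) (Q.obj A)).inv := by monoidal
      _ = ((α_ (X ⊗ Q.obj A) (Q.obj B) (Q.obj Cc)).hom ≫
          (α_ X (Q.obj A) (Q.obj B ⊗ Q.obj Cc)).hom ≫
          (X ◁ (α_ (Q.obj A) (Q.obj B) (Q.obj Cc)).inv)) ≫
        (X ◁ ((α_ _ _ _).hom ≫ (Q.obj A ◁ v B Cc) ≫ (y A (B ⊗ Q.obj Cc)).hom)) ≫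
        (α_ X (Q.obj (B ⊗ Q.obj Cc)) (Q.obj A)).inv := by rw [h1a A B Cc]
      _ = _ := by monoidal
  · calc _ = ((α_ (X ⊗ Q.obj A) (Q.obj B) (Q.obj Cc)).hom ≫
          (α_ X (Q.obj A) (Q.obj B ⊗ Q.obj Cc)).hom ≫
          (X ◁ (α_ (Q.obj A) (Q.obj B) (Q.obj Cc)).inv)) ≫
        (X ◁ ((α_ _ _ _).hom ≫ (Q.obj A ◁ (y B Cc).hom) ≫ (α_ _ _ _).inv ≫
          ((y A Cc).hom ▷ Q.obj B) ≫ (α_ _ _ _).hom ≫ (Q.obj Cc ◁ v A B))) ≫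
        (α_ X (Q.obj Cc) (Q.obj (A ⊗ Q.obj B))).inv := by monoidal
      _ = ((α_ (X ⊗ Q.obj A) (Q.obj B) (Q.obj Cc)).hom ≫
          (α_ X (Q.obj A) (Q.obj B ⊗ Q.obj Cc)).hom ≫
          (X ◁ (α_ (Q.obj A) (Q.obj B) (Q.obj Cc)).inv)) ≫
        (X ◁ ((v A B ▷ Q.obj Cc) ≫ (y (A ⊗ Q.obj B) Cc).hom)) ≫
        (α_ X (Q.obj Cc) (Q.obj (A ⊗ Q.obj B))).inv := by rw [h1b A B Cc]
      _ = _ := by monoidal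
  · calc _ = ((α_ (X ⊗ Q.obj A) (Q.obj B) (Q.obj Cc)).hom ≫
          (α_ X (Q.obj A) (Q.obj B ⊗ Q.obj Cc)).hom ≫
          (X ◁ (α_ (Q.obj A) (Q.obj B) (Q.obj Cc)).inv)) ≫
        (X ◁ ((v A B ▷ Q.obj Cc) ≫ v (A ⊗ Q.obj B) Cc ≫
          Q.map ((α_ A (Q.obj B) (Q.obj Cc)).hom ≫ (A ◁ (y B Cc).hom) ≫
            (α_ A (Q.obj Cc) (Q.obj B)).inv))) ≫
        (𝟙 (X ⊗ Q.obj ((A ⊗ Q.obj Cc) ⊗ Q.obj B))) := by monoidal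
      _ = ((α_ (X ⊗ Q.obj A) (Q.obj B) (Q.obj Cc)).hom ≫
          (α_ X (Q.obj A) (Q.obj B ⊗ Q.obj Cc)).hom ≫
          (X ◁ (α_ (Q.obj A) (Q.obj B) (Q.obj Cc)).inv)) ≫
        (X ◁ ((α_ _ _ _).hom ≫ (Q.obj A ◁ (y B Cc).hom) ≫ (α_ _ _ _).inv ≫
          (v A Cc ▷ Q.obj B) ≫ v (A ⊗ Q.obj Cc) B)) ≫
        (𝟙 (X ⊗ Q.obj ((A ⊗ Q.obj Cc) ⊗ Q.obj B))) := by rw [hf A B Cc]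
      _ = _ := by monoidal
end

section
/- Let C be a monoidal category in which, for any objects X and A, the family of maps x⊗1 : I⊗A → X⊗A indexed by morphisms x : I → X is jointly epimorphic, and let Q be a skew cowarping on C. Then the construction sending a braiding y on Q to the braiding 1⊗y on the cowarped skew monoidal category C[Q] is a bijection between braidings on Q and braidings on C[Q]. -/
open CategoryTheory MonoidalCategory

universe v u

variable {C : Type u} [Category.{v} C] [MonoidalCategory C]

namespace SkewCowarping

variable (Q : C ⥤ C) (K : C)
  (v : ∀ X Y : C, Q.obj X ⊗ Q.obj Y ⟶ Q.obj (X ⊗ Q.obj Y))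
  (v₀ : 𝟙_ C ⟶ Q.obj K) (k : ∀ X : C, K ⊗ Q.obj X ⟶ X)

/-- A braiding on the skew cowarping `Q`: a natural isomorphism
`y : QX⊗QY ≅ QY⊗QX` satisfying equations (1), (1a), (1b) and (funny). -/
structure QBraiding where
  y : ∀ X Y : C, Q.obj X ⊗ Q.obj Y ≅ Q.obj Y ⊗ Q.obj X
  natural : YNatural Q y
  yb : Y1 Q y
  hex_a : Y1a Q v y
  hex_b : Y1b Q v y
  funny : Yfunny Q v y

/-- A braiding on the cowarped skew monoidal category `C[Q]`: a natural
isomorphism `s : (X*A)*B ≅ (X*B)*A` satisfying (S2), (S3a), (S3b), (S*). -/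
structure CQBraiding where
  s : ∀ X A B : C, star Q (star Q X A) B ≅ star Q (star Q X B) A
  natural : ∀ {X X' A A' B B' : C} (f : X ⟶ X') (g : A ⟶ A') (h : B ⟶ B'),
      starHom Q (starHom Q f g) h ≫ (s X' A' B').hom =
        (s X A B).hom ≫ starHom Q (starHom Q f h) g
  S2 : ∀ X A B Cc : C,
      (s (star Q X A) B Cc).hom ≫ starHom Q (s X A Cc).hom (𝟙 B) ≫
          (s (star Q X Cc) A B).hom =
        starHom Q (s X A B).hom (𝟙 Cc) ≫ (s (star Q X B) A Cc).hom ≫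
          starHom Q (s X B Cc).hom (𝟙 A)
  S3a : ∀ X A B Cc : C,
      starHom Q (s X A B).hom (𝟙 Cc) ≫ (s (star Q X B) A Cc).hom ≫
          starHom Q (sAssoc Q v X B Cc) (𝟙 A) =
        sAssoc Q v (star Q X A) B Cc ≫ (s X A (star Q B Cc)).hom
  S3b : ∀ X A B Cc : C,
      (s (star Q X A) B Cc).hom ≫ starHom Q (s X A Cc).hom (𝟙 B) ≫
          sAssoc Q v (star Q X Cc) A B =
        starHom Q (sAssoc Q v X A B) (𝟙 Cc) ≫ (s X (star Q A B) Cc).hom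
  Sstar : ∀ X A B Cc : C,
      starHom Q (sAssoc Q v X A B) (𝟙 Cc) ≫ sAssoc Q v X (star Q A B) Cc ≫
          starHom Q (𝟙 X) (s A B Cc).hom =
        (s (star Q X A) B Cc).hom ≫ starHom Q (sAssoc Q v X A Cc) (𝟙 B) ≫
          sAssoc Q v X (star Q A Cc) B

end SkewCowarping


set_option maxHeartbeats 1600000

namespace SkewCowarping

variable {C : Type u} [Category.{v} C] [MonoidalCategory C]
variable (Q : C ⥤ C)
  (v : ∀ X Y : C, Q.obj X ⊗ Q.obj Y ⟶ Q.obj (X ⊗ Q.obj Y))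
variable (y : ∀ X Y : C, Q.obj X ⊗ Q.obj Y ≅ Q.obj Y ⊗ Q.obj X)

/-- The structural iso `((X⊗a)⊗b)⊗c ≅ X⊗((a⊗b)⊗c)`. -/
def assocL (X a b c : C) : ((X ⊗ a) ⊗ b) ⊗ c ≅ X ⊗ ((a ⊗ b) ⊗ c) :=
  whiskerRightIso (α_ X a b) c ≪≫ α_ X (a ⊗ b) c

/-- `sB` as an isomorphism. -/
def sBIso (X A B : C) : star Q (star Q X A) B ≅ star Q (star Q X B) A where
  hom := sB Q y X A B
  inv := (α_ X (Q.obj B) (Q.obj A)).hom ≫ (X ◁ (y A B).inv) ≫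
    (α_ X (Q.obj A) (Q.obj B)).inv
  hom_inv_id := by simp [sB, star, ← MonoidalCategory.whiskerLeft_comp]
  inv_hom_id := by simp [sB, star, ← MonoidalCategory.whiskerLeft_comp]

lemma sBIso_hom (X A B : C) : (sBIso Q y X A B).hom = sB Q y X A B := rfl

lemma conj_cancel {W P T V : C} (e : W ≅ P) (e' : T ≅ V) {m m' : P ⟶ T}
    (h : e.hom ≫ m ≫ e'.hom = e.hom ≫ m' ≫ e'.hom) : m = m' := by
  have h2 := congrArg (fun t => e.inv ≫ t ≫ e'.inv) h
  simpa using h2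

lemma conj_cancel' {W P T : C} (e : W ≅ P) {m m' : P ⟶ T}
    (h : e.hom ≫ m = e.hom ≫ m') : m = m' := by
  have h2 := congrArg (fun t => e.inv ≫ t) h
  simpa using h2

lemma unit_whiskerLeft_cancel {P T : C} {f g : P ⟶ T} (h : 𝟙_ C ◁ f = 𝟙_ C ◁ g) :
    f = g := by
  have h2 : (λ_ P).inv ≫ (𝟙_ C ◁ f) ≫ (λ_ T).hom =
      (λ_ P).inv ≫ (𝟙_ C ◁ g) ≫ (λ_ T).hom := by rw [h]
  simpa using h2

lemma nat_conj_L {X X' A A' B B' : C} (f : X ⟶ X') (g : A ⟶ A') (h : B ⟶ B') :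
    starHom Q (starHom Q f g) h ≫ sB Q y X' A' B' =
      (α_ X (Q.obj A) (Q.obj B)).hom ≫
        (X ◁ ((Q.map g ⊗ₘ Q.map h) ≫ (y A' B').hom)) ≫
          (f ▷ (Q.obj B' ⊗ Q.obj A')) ≫ (α_ X' (Q.obj B') (Q.obj A')).inv := by
  simp only [sB, starHom, star]
  rw [associator_naturality_assoc]
  slice_lhs 2 3 => rw [← id_tensorHom, tensorHom_comp_tensorHom, Category.comp_id]
  slice_rhs 2 3 => rw [← id_tensorHom, ← tensorHom_id, tensorHom_comp_tensorHom,
    Category.id_comp, Category.comp_id]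

lemma nat_conj_R {X X' A A' B B' : C} (f : X ⟶ X') (g : A ⟶ A') (h : B ⟶ B') :
    sB Q y X A B ≫ starHom Q (starHom Q f h) g =
      (α_ X (Q.obj A) (Q.obj B)).hom ≫
        (X ◁ ((y A B).hom ≫ (Q.map h ⊗ₘ Q.map g))) ≫
          (f ▷ (Q.obj B' ⊗ Q.obj A')) ≫ (α_ X' (Q.obj B') (Q.obj A')).inv := by
  simp only [sB, starHom, star, Category.assoc]
  rw [← associator_inv_naturality]
  slice_lhs 2 3 => rw [← id_tensorHom, tensorHom_comp_tensorHom, Category.id_comp]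
  slice_rhs 2 3 => rw [← id_tensorHom, ← tensorHom_id, tensorHom_comp_tensorHom,
    Category.id_comp, Category.comp_id]

lemma S2_conj_L (X A B Cc : C) :
    (sB Q y (star Q X A) B Cc) ≫ starHom Q (sB Q y X A Cc) (𝟙 B) ≫
        (sB Q y (star Q X Cc) A B) =
      (assocL X (Q.obj A) (Q.obj B) (Q.obj Cc)).hom ≫
        (X ◁ ((α_ _ _ _).hom ≫ (Q.obj A ◁ (y B Cc).hom) ≫ (α_ _ _ _).inv ≫
          ((y A Cc).hom ▷ Q.obj B) ≫ (α_ _ _ _).hom ≫ (Q.obj Cc ◁ (y A B).hom) ≫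
            (α_ _ _ _).inv)) ≫
          (assocL X (Q.obj Cc) (Q.obj B) (Q.obj A)).inv := by
  simp only [sB, starHom, star, assocL, Iso.trans_hom, Iso.trans_inv,
    whiskerRightIso_hom, whiskerRightIso_inv, CategoryTheory.Functor.map_id,
    tensorHom_id]
  monoidal

lemma S2_conj_R (X A B Cc : C) :
    starHom Q (sB Q y X A B) (𝟙 Cc) ≫ (sB Q y (star Q X B) A Cc) ≫
        starHom Q (sB Q y X B Cc) (𝟙 A) =
      (assocL X (Q.obj A) (Q.obj B) (Q.obj Cc)).hom ≫
        (X ◁ (((y A B).hom ▷ Q.obj Cc) ≫ (α_ _ _ _).hom ≫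
          (Q.obj B ◁ (y A Cc).hom) ≫ (α_ _ _ _).inv ≫ ((y B Cc).hom ▷ Q.obj A))) ≫
          (assocL X (Q.obj Cc) (Q.obj B) (Q.obj A)).inv := by
  simp only [sB, starHom, star, assocL, Iso.trans_hom, Iso.trans_inv,
    whiskerRightIso_hom, whiskerRightIso_inv, CategoryTheory.Functor.map_id,
    tensorHom_id]
  monoidal

lemma S3a_conj_L (X A B Cc : C) :
    starHom Q (sB Q y X A B) (𝟙 Cc) ≫ (sB Q y (star Q X B) A Cc) ≫
        starHom Q (sAssoc Q v X B Cc) (𝟙 A) =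
      (assocL X (Q.obj A) (Q.obj B) (Q.obj Cc)).hom ≫
        (X ◁ (((y A B).hom ▷ Q.obj Cc) ≫ (α_ _ _ _).hom ≫
          (Q.obj B ◁ (y A Cc).hom) ≫ (α_ _ _ _).inv ≫ (v B Cc ▷ Q.obj A))) ≫
          (α_ X (Q.obj (B ⊗ Q.obj Cc)) (Q.obj A)).inv := by
  simp only [sB, sAssoc, starHom, star, assocL, Iso.trans_hom, Iso.trans_inv,
    whiskerRightIso_hom, whiskerRightIso_inv, CategoryTheory.Functor.map_id,
    tensorHom_id]
  monoidal

lemma S3a_conj_R (X A B Cc : C) :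
    sAssoc Q v (star Q X A) B Cc ≫ (sB Q y X A (star Q B Cc)) =
      (assocL X (Q.obj A) (Q.obj B) (Q.obj Cc)).hom ≫
        (X ◁ ((α_ _ _ _).hom ≫ (Q.obj A ◁ v B Cc) ≫ (y A (B ⊗ Q.obj Cc)).hom)) ≫
          (α_ X (Q.obj (B ⊗ Q.obj Cc)) (Q.obj A)).inv := by
  simp only [sB, sAssoc, starHom, star, assocL, Iso.trans_hom, Iso.trans_inv,
    whiskerRightIso_hom, whiskerRightIso_inv, CategoryTheory.Functor.map_id,
    tensorHom_id]
  monoidal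

lemma S3b_conj_L (X A B Cc : C) :
    (sB Q y (star Q X A) B Cc) ≫ starHom Q (sB Q y X A Cc) (𝟙 B) ≫
        sAssoc Q v (star Q X Cc) A B =
      (assocL X (Q.obj A) (Q.obj B) (Q.obj Cc)).hom ≫
        (X ◁ ((α_ _ _ _).hom ≫ (Q.obj A ◁ (y B Cc).hom) ≫ (α_ _ _ _).inv ≫
          ((y A Cc).hom ▷ Q.obj B) ≫ (α_ _ _ _).hom ≫ (Q.obj Cc ◁ v A B))) ≫
          (α_ X (Q.obj Cc) (Q.obj (A ⊗ Q.obj B))).inv := by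
  simp only [sB, sAssoc, starHom, star, assocL, Iso.trans_hom, Iso.trans_inv,
    whiskerRightIso_hom, whiskerRightIso_inv, CategoryTheory.Functor.map_id,
    tensorHom_id]
  monoidal

lemma S3b_conj_R (X A B Cc : C) :
    starHom Q (sAssoc Q v X A B) (𝟙 Cc) ≫ (sB Q y X (star Q A B) Cc) =
      (assocL X (Q.obj A) (Q.obj B) (Q.obj Cc)).hom ≫
        (X ◁ ((v A B ▷ Q.obj Cc) ≫ (y (A ⊗ Q.obj B) Cc).hom)) ≫
          (α_ X (Q.obj Cc) (Q.obj (A ⊗ Q.obj B))).inv := by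
  simp only [sB, sAssoc, starHom, star, assocL, Iso.trans_hom, Iso.trans_inv,
    whiskerRightIso_hom, whiskerRightIso_inv, CategoryTheory.Functor.map_id,
    tensorHom_id]
  monoidal

lemma Sstar_conj_L (X A B Cc : C) :
    starHom Q (sAssoc Q v X A B) (𝟙 Cc) ≫ sAssoc Q v X (star Q A B) Cc ≫
        starHom Q (𝟙 X) (sB Q y A B Cc) =
      (assocL X (Q.obj A) (Q.obj B) (Q.obj Cc)).hom ≫
        (X ◁ ((v A B ▷ Q.obj Cc) ≫ v (A ⊗ Q.obj B) Cc ≫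
          Q.map ((α_ A (Q.obj B) (Q.obj Cc)).hom ≫ (A ◁ (y B Cc).hom) ≫
            (α_ A (Q.obj Cc) (Q.obj B)).inv))) := by
  simp only [sB, sAssoc, starHom, star, assocL, Iso.trans_hom, Iso.trans_inv,
    whiskerRightIso_hom, whiskerRightIso_inv, CategoryTheory.Functor.map_id,
    tensorHom_id, id_tensorHom]
  monoidal

lemma Sstar_conj_R (X A B Cc : C) :
    (sB Q y (star Q X A) B Cc) ≫ starHom Q (sAssoc Q v X A Cc) (𝟙 B) ≫
        sAssoc Q v X (star Q A Cc) B =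
      (assocL X (Q.obj A) (Q.obj B) (Q.obj Cc)).hom ≫
        (X ◁ ((α_ _ _ _).hom ≫ (Q.obj A ◁ (y B Cc).hom) ≫ (α_ _ _ _).inv ≫
          (v A Cc ▷ Q.obj B) ≫ v (A ⊗ Q.obj Cc) B)) := by
  simp only [sB, sAssoc, starHom, star, assocL, Iso.trans_hom, Iso.trans_inv,
    whiskerRightIso_hom, whiskerRightIso_inv, CategoryTheory.Functor.map_id,
    tensorHom_id, id_tensorHom]
  monoidal

/-- The braiding on `C[Q]` induced by a braiding on `Q`. -/
def toCQ (yb : QBraiding Q v) : CQBraiding Q v where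
  s X A B := sBIso Q yb.y X A B
  natural := by
    intro X X' A A' B B' f g h
    simp only [sBIso_hom]
    rw [nat_conj_L, nat_conj_R, yb.natural g h]
  S2 := by
    intro X A B D
    simp only [sBIso_hom]
    rw [S2_conj_L, S2_conj_R, yb.yb A B D]
  S3a := by
    intro X A B D
    simp only [sBIso_hom]
    rw [S3a_conj_L, S3a_conj_R, yb.hex_a A B D]
  S3b := by
    intro X A B D
    simp only [sBIso_hom]
    rw [S3b_conj_L, S3b_conj_R, yb.hex_b A B D]
  Sstar := by
    intro X A B D
    simp only [sBIso_hom]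
    rw [Sstar_conj_L, Sstar_conj_R, yb.funny A B D]

/-- The braiding on `Q` extracted from a braiding on `C[Q]`. -/
def yOf (cq : CQBraiding Q v) (A B : C) :
    Q.obj A ⊗ Q.obj B ≅ Q.obj B ⊗ Q.obj A :=
  whiskerRightIso (λ_ (Q.obj A)).symm (Q.obj B) ≪≫ cq.s (𝟙_ C) A B ≪≫
    whiskerRightIso (λ_ (Q.obj B)) (Q.obj A)

lemma yOf_hom (cq : CQBraiding Q v) (A B : C) :
    (yOf Q v cq A B).hom = ((λ_ (Q.obj A)).inv ▷ Q.obj B) ≫ (cq.s (𝟙_ C) A B).hom ≫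
      ((λ_ (Q.obj B)).hom ▷ Q.obj A) := rfl

lemma QBraiding.ext' {q q' : QBraiding Q v} (h : q.y = q'.y) : q = q' := by
  cases q; cases q'; cases h; rfl

lemma CQBraiding.ext' {q q' : CQBraiding Q v} (h : q.s = q'.s) : q = q' := by
  cases q; cases q'; cases h; rfl

lemma sB_whisker_nat {X A B : C} (x : 𝟙_ C ⟶ X) :
    ((x ▷ Q.obj A) ▷ Q.obj B) ≫ sB Q y X A B =
      sB Q y (𝟙_ C) A B ≫ ((x ▷ Q.obj B) ▷ Q.obj A) := by
  have h1 := nat_conj_L Q y x (𝟙 A) (𝟙 B)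
  have h2 := nat_conj_R Q y x (𝟙 A) (𝟙 B)
  dsimp only [starHom, star] at h1 h2 ⊢
  simp only [starHom, CategoryTheory.Functor.map_id, tensorHom_id,
    MonoidalCategory.id_tensorHom_id, MonoidalCategory.id_whiskerRight,
    Category.id_comp, Category.comp_id] at h1 h2
  rw [h1, h2]

variable (hepi : ∀ {X A Z : C} (f g : X ⊗ A ⟶ Z),
      (∀ x : 𝟙_ C ⟶ X, (x ▷ A) ≫ f = (x ▷ A) ≫ g) → f = g)

include hepi

lemma s_hom_eq (cq : CQBraiding Q v) (X A B : C) :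
    (cq.s X A B).hom = sB Q (yOf Q v cq) X A B := by
  have base : (cq.s (𝟙_ C) A B).hom = sB Q (yOf Q v cq) (𝟙_ C) A B := by
    simp only [sB, yOf_hom]
    dsimp only [star]
    monoidal
  have key : ∀ x : 𝟙_ C ⟶ X,
      (x ▷ (Q.obj A ⊗ Q.obj B)) ≫
          ((α_ X (Q.obj A) (Q.obj B)).inv ≫ (cq.s X A B).hom) =
        (x ▷ (Q.obj A ⊗ Q.obj B)) ≫
          ((α_ X (Q.obj A) (Q.obj B)).inv ≫ sB Q (yOf Q v cq) X A B) := by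
    intro x
    have hn := cq.natural x (𝟙 A) (𝟙 B)
    dsimp only [starHom, star] at hn
    simp only [starHom, CategoryTheory.Functor.map_id, tensorHom_id] at hn
    have st1 : (x ▷ (Q.obj A ⊗ Q.obj B)) ≫ (α_ X (Q.obj A) (Q.obj B)).inv =
        (α_ (𝟙_ C) (Q.obj A) (Q.obj B)).inv ≫ ((x ▷ Q.obj A) ▷ Q.obj B) := by
      monoidal
    have e1 : (x ▷ (Q.obj A ⊗ Q.obj B)) ≫
          ((α_ X (Q.obj A) (Q.obj B)).inv ≫ (cq.s X A B).hom)
        = (α_ (𝟙_ C) (Q.obj A) (Q.obj B)).inv ≫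
            (((x ▷ Q.obj A) ▷ Q.obj B) ≫ (cq.s X A B).hom) := by
      dsimp only [star]
      rw [← Category.assoc, st1, Category.assoc]
    have e2 : (α_ (𝟙_ C) (Q.obj A) (Q.obj B)).inv ≫
            (((x ▷ Q.obj A) ▷ Q.obj B) ≫ (cq.s X A B).hom)
        = (α_ (𝟙_ C) (Q.obj A) (Q.obj B)).inv ≫
            ((cq.s (𝟙_ C) A B).hom ≫ ((x ▷ Q.obj B) ▷ Q.obj A)) := by dsimp only [star]; rw [hn]
    have e3 : (α_ (𝟙_ C) (Q.obj A) (Q.obj B)).inv ≫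
            ((cq.s (𝟙_ C) A B).hom ≫ ((x ▷ Q.obj B) ▷ Q.obj A))
        = (α_ (𝟙_ C) (Q.obj A) (Q.obj B)).inv ≫
            (sB Q (yOf Q v cq) (𝟙_ C) A B ≫ ((x ▷ Q.obj B) ▷ Q.obj A)) := by
      dsimp only [star]
      rw [base]
    have e4 : (α_ (𝟙_ C) (Q.obj A) (Q.obj B)).inv ≫
            (sB Q (yOf Q v cq) (𝟙_ C) A B ≫ ((x ▷ Q.obj B) ▷ Q.obj A))
        = (α_ (𝟙_ C) (Q.obj A) (Q.obj B)).inv ≫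
            (((x ▷ Q.obj A) ▷ Q.obj B) ≫ sB Q (yOf Q v cq) X A B) := by
      exact congrArg (CategoryStruct.comp _) (sB_whisker_nat Q (yOf Q v cq) x).symm
    have e5 : (α_ (𝟙_ C) (Q.obj A) (Q.obj B)).inv ≫
            (((x ▷ Q.obj A) ▷ Q.obj B) ≫ sB Q (yOf Q v cq) X A B)
        = (x ▷ (Q.obj A ⊗ Q.obj B)) ≫
          ((α_ X (Q.obj A) (Q.obj B)).inv ≫ sB Q (yOf Q v cq) X A B) := by
      exact ((Category.assoc _ _ _).symm.trans
        ((congrArg (· ≫ sB Q (yOf Q v cq) X A B) st1).trans (Category.assoc _ _ _))).symm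
    exact e1.trans (e2.trans (e3.trans (e4.trans e5)))
  have h := hepi _ _ key
  have h2 := congrArg (fun t => (α_ X (Q.obj A) (Q.obj B)).hom ≫ t) h
  exact (cancel_epi (α_ X (Q.obj A) (Q.obj B)).inv).1 h

/-- The braiding on `Q` extracted from a braiding on `C[Q]`, with its axioms. -/
def ofCQ (cq : CQBraiding Q v) : QBraiding Q v where
  y := yOf Q v cq
  natural := by
    intro A A' B B' g h
    have hn := cq.natural (𝟙 (𝟙_ C)) g h
    simp only [s_hom_eq Q v hepi cq] at hn
    rw [nat_conj_L, nat_conj_R] at hn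
    simp only [id_whiskerRight, Category.id_comp] at hn
    exact unit_whiskerLeft_cancel
      (conj_cancel (α_ (𝟙_ C) (Q.obj A) (Q.obj B))
        (α_ (𝟙_ C) (Q.obj B') (Q.obj A')).symm hn)
  yb := by
    intro A B D
    have h := cq.S2 (𝟙_ C) A B D
    simp only [s_hom_eq Q v hepi cq] at h
    rw [S2_conj_L, S2_conj_R] at h
    exact unit_whiskerLeft_cancel
      (conj_cancel (assocL (𝟙_ C) (Q.obj A) (Q.obj B) (Q.obj D))
        (assocL (𝟙_ C) (Q.obj D) (Q.obj B) (Q.obj A)).symm h).symm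
  hex_a := by
    intro A B D
    have h := cq.S3a (𝟙_ C) A B D
    simp only [s_hom_eq Q v hepi cq] at h
    rw [S3a_conj_L, S3a_conj_R] at h
    exact unit_whiskerLeft_cancel
      (conj_cancel (assocL (𝟙_ C) (Q.obj A) (Q.obj B) (Q.obj D))
        (α_ (𝟙_ C) (Q.obj (B ⊗ Q.obj D)) (Q.obj A)).symm h)
  hex_b := by
    intro A B D
    have h := cq.S3b (𝟙_ C) A B D
    simp only [s_hom_eq Q v hepi cq] at h
    rw [S3b_conj_L, S3b_conj_R] at h
    exact unit_whiskerLeft_cancel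
      (conj_cancel (assocL (𝟙_ C) (Q.obj A) (Q.obj B) (Q.obj D))
        (α_ (𝟙_ C) (Q.obj D) (Q.obj (A ⊗ Q.obj B))).symm h)
  funny := by
    intro A B D
    have h := cq.Sstar (𝟙_ C) A B D
    simp only [s_hom_eq Q v hepi cq] at h
    rw [Sstar_conj_L, Sstar_conj_R] at h
    exact unit_whiskerLeft_cancel
      (conj_cancel' (assocL (𝟙_ C) (Q.obj A) (Q.obj B) (Q.obj D)) h)

/-- The bijection between braidings on `Q` and braidings on `C[Q]`. -/
def theEquiv : QBraiding Q v ≃ CQBraiding Q v where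
  toFun := toCQ Q v
  invFun := ofCQ Q v hepi
  left_inv yb := by
    apply QBraiding.ext'
    funext A B
    apply Iso.ext
    show (yOf Q v (toCQ Q v yb) A B).hom = (yb.y A B).hom
    simp only [yOf_hom, toCQ, sBIso_hom, sB]
    monoidal
  right_inv cq := by
    apply CQBraiding.ext'
    funext X A B
    apply Iso.ext
    exact (s_hom_eq Q v hepi cq X A B).symm

end SkewCowarping

open SkewCowarping in
/-- Proposition 4.3: if in the monoidal category `C` the maps
`x ⊗ 1 : I ⊗ A ⟶ X ⊗ A` (for `x : I ⟶ X`) are jointly epimorphic, then for any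
skew cowarping `Q` on `C` the construction `y ↦ 1 ⊗ y` is a bijection between
braidings on `Q` and braidings on the cowarped skew monoidal category `C[Q]`. -/
theorem stmt12 {C : Type u} [Category.{v} C] [MonoidalCategory C]
    (hepi : ∀ {X A Z : C} (f g : X ⊗ A ⟶ Z),
      (∀ x : 𝟙_ C ⟶ X, (x ▷ A) ≫ f = (x ▷ A) ≫ g) → f = g)
    (Q : C ⥤ C) (K : C)
    (v : ∀ X Y : C, Q.obj X ⊗ Q.obj Y ⟶ Q.obj (X ⊗ Q.obj Y))
    (v₀ : 𝟙_ C ⟶ Q.obj K) (k : ∀ X : C, K ⊗ Q.obj X ⟶ X)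
    (hv : VNatural Q v) (hk : KNatural Q K k)
    (hax : CowarpAxioms Q K v v₀ k) :
    ∃ E : QBraiding Q v ≃ CQBraiding Q v,
      ∀ (yb : QBraiding Q v) (X A B : C),
        ((E yb).s X A B).hom = sB Q yb.y X A B := by
  exact ⟨theEquiv Q v @hepi, fun yb X A B => rfl⟩
end
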